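/- arXiv:0903.3698 — 3 statements merged into one kernel-verified Lean document; each statement's English description precedes it below -/
import Mathlib

section
/- Let φ be an r-fold Pfister form over k (char k ≠ 2), b₁,…,bₙ ∈ k* with n ≥ 2, set b' = ⟨b₁,…,b_{n−1}⟩ and q = φ ⊗ b' ⊥ ⟨bₙ⟩. For every 0 ≤ d ≤ ⌊n/2⌋ − 1: i_W(φ ⊗ (b' ⊥ ⟨bₙ⟩)) > 2^r d if and only if i_W(q) > 2^r d. -/
/-- The Witt index of a quadratic form: the maximal dimension of a totally
isotropic subspace. -/
noncomputable def wittIndex (k : Type*) {V : Type*} [Field k] [AddCommGroup V]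
    [Module k V] (q : QuadraticForm k V) : ℕ :=
  sSup {m | ∃ U : Submodule k V, (∀ x ∈ U, q x = 0) ∧ Module.finrank k U = m}

namespace WIS

open Module QuadraticMap

variable {k V V₂ : Type*} [Field k] [AddCommGroup V] [Module k V]
  [AddCommGroup V₂] [Module k V₂]

lemma wittIndex_bddAbove (q : QuadraticForm k V) [FiniteDimensional k V] :
    BddAbove {m | ∃ U : Submodule k V, (∀ x ∈ U, q x = 0) ∧ Module.finrank k U = m} := by
  refine ⟨finrank k V, fun m hm => ?_⟩
  obtain ⟨U, -, rfl⟩ := hm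
  exact Submodule.finrank_le U

lemma le_wittIndex (q : QuadraticForm k V) [FiniteDimensional k V] (U : Submodule k V)
    (hU : ∀ x ∈ U, q x = 0) : finrank k U ≤ wittIndex k q :=
  le_csSup (wittIndex_bddAbove q) ⟨U, hU, rfl⟩

lemma exists_wittIndex (q : QuadraticForm k V) [FiniteDimensional k V] :
    ∃ U : Submodule k V, (∀ x ∈ U, q x = 0) ∧ Module.finrank k U = wittIndex k q := by
  have h : wittIndex k q ∈
      {m | ∃ U : Submodule k V, (∀ x ∈ U, q x = 0) ∧ Module.finrank k U = m} := by
    apply Nat.sSup_mem ?_ (wittIndex_bddAbove q)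
    exact ⟨0, ⊥, by simp, by simp⟩
  exact h

/-- monotonicity along an injective linear map intertwining the forms -/
lemma wittIndex_le_of_map (q₁ : QuadraticForm k V) (q₂ : QuadraticForm k V₂)
    [FiniteDimensional k V] [FiniteDimensional k V₂]
    (f : V →ₗ[k] V₂) (hf : Function.Injective f) (hq : ∀ x, q₂ (f x) = q₁ x) :
    wittIndex k q₁ ≤ wittIndex k q₂ := by
  obtain ⟨U, hU, hr⟩ := exists_wittIndex q₁
  rw [← hr]
  have hUm : ∀ y ∈ U.map f, q₂ y = 0 := by
    rintro y ⟨x, hx, rfl⟩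
    rw [hq]; exact hU x hx
  have : finrank k (U.map f) = finrank k U := by
    have h1 := LinearMap.finrank_range_add_finrank_ker (f.comp U.subtype)
    have hker : LinearMap.ker (f.comp U.subtype) = ⊥ := by
      rw [LinearMap.ker_eq_bot]
      exact hf.comp U.injective_subtype
    have hrange : LinearMap.range (f.comp U.subtype) = U.map f := by
      rw [LinearMap.range_comp, Submodule.range_subtype]
    rw [hker, hrange, finrank_bot, add_zero] at h1
    exact h1
  rw [← this]
  exact le_wittIndex q₂ _ hUm

lemma wittIndex_eq_of_equiv (q₁ : QuadraticForm k V) (q₂ : QuadraticForm k V₂)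
    [FiniteDimensional k V] [FiniteDimensional k V₂]
    (g : V ≃ₗ[k] V₂) (hq : ∀ x, q₂ (g x) = q₁ x) :
    wittIndex k q₁ = wittIndex k q₂ := by
  refine le_antisymm (wittIndex_le_of_map q₁ q₂ g.toLinearMap g.injective hq) ?_
  refine wittIndex_le_of_map q₂ q₁ g.symm.toLinearMap g.symm.injective (fun x => ?_)
  conv_rhs => rw [← g.apply_symm_apply x]
  rw [hq]
  rfl

lemma one_le_wittIndex (q : QuadraticForm k V) [FiniteDimensional k V]
    (x : V) (hx : x ≠ 0) (hqx : q x = 0) : 1 ≤ wittIndex k q := by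
  have h := le_wittIndex q (k ∙ x) ?_
  · rwa [finrank_span_singleton hx] at h
  · intro y hy
    obtain ⟨c, rfl⟩ := Submodule.mem_span_singleton.mp hy
    rw [QuadraticMap.map_smul, hqx, smul_zero]

lemma wittIndex_eq_zero (q : QuadraticForm k V)
    (h : ∀ x, q x = 0 → x = 0) : wittIndex k q = 0 := by
  have : {m | ∃ U : Submodule k V, (∀ x ∈ U, q x = 0) ∧ Module.finrank k U = m} = {0} := by
    ext m
    simp only [Set.mem_setOf_eq, Set.mem_singleton_iff]
    constructor
    · rintro ⟨U, hU, rfl⟩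
      have : U = ⊥ := by
        rw [Submodule.eq_bot_iff]
        exact fun x hx => h x (hU x hx)
      rw [this, finrank_bot]
    · rintro rfl
      exact ⟨⊥, by simp, by simp⟩
  rw [wittIndex, this, csSup_singleton]

lemma exists_isotropic_of_wittIndex_pos (q : QuadraticForm k V) [FiniteDimensional k V]
    (h : 1 ≤ wittIndex k q) : ∃ x, x ≠ 0 ∧ q x = 0 := by
  by_contra hc
  push_neg at hc
  have := wittIndex_eq_zero q (fun x hx => by
    by_contra hx0; exact (hc x hx0) hx)
  omega

end WIS


namespace WIS
open Module QuadraticMap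

variable {k : Type*} [Field k]

noncomputable def Qw {ι : Type*} [Fintype ι] (w : ι → k) : QuadraticForm k (ι → k) :=
  QuadraticMap.weightedSumSquares k w

lemma Qw_apply {ι : Type*} [Fintype ι] (w : ι → k) (x : ι → k) :
    Qw w x = ∑ i, w i * (x i * x i) := by
  rw [Qw, weightedSumSquares_apply]; simp [smul_eq_mul]

lemma Qw_sum_apply {ι κ : Type*} [Fintype ι] [Fintype κ] (w : ι ⊕ κ → k) (x : ι ⊕ κ → k) :
    Qw w x = Qw (w ∘ Sum.inl) (x ∘ Sum.inl) + Qw (w ∘ Sum.inr) (x ∘ Sum.inr) := by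
  rw [Qw_apply, Qw_apply, Qw_apply, Fintype.sum_sum_type]; rfl

/-- Isometry relation between two diagonal forms. -/
def Iso {ι κ : Type*} [Fintype ι] [Fintype κ] (w₁ : ι → k) (w₂ : κ → k) : Prop :=
  ∃ g : (ι → k) ≃ₗ[k] (κ → k), ∀ x, Qw w₂ (g x) = Qw w₁ x

variable {ι κ γ ι' κ' : Type*} [Fintype ι] [Fintype κ] [Fintype γ] [Fintype ι'] [Fintype κ']

lemma Iso.refl (w : ι → k) : Iso w w := ⟨LinearEquiv.refl k _, fun _ => rfl⟩

lemma Iso.symm {w₁ : ι → k} {w₂ : κ → k} (h : Iso w₁ w₂) : Iso w₂ w₁ := by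
  obtain ⟨g, hg⟩ := h
  exact ⟨g.symm, fun x => by conv_rhs => rw [← g.apply_symm_apply x, hg]⟩

lemma Iso.trans {w₁ : ι → k} {w₂ : κ → k} {w₃ : γ → k}
    (h : Iso w₁ w₂) (h' : Iso w₂ w₃) : Iso w₁ w₃ := by
  obtain ⟨g, hg⟩ := h; obtain ⟨g', hg'⟩ := h'
  exact ⟨g.trans g', fun x => by simp [LinearEquiv.trans_apply, hg', hg]⟩

lemma Iso.wittIndex_eq {w₁ : ι → k} {w₂ : κ → k} (h : Iso w₁ w₂) :
    wittIndex k (Qw w₁) = wittIndex k (Qw w₂) := by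
  obtain ⟨g, hg⟩ := h
  exact wittIndex_eq_of_equiv _ _ g hg

/-- reindexing isometry -/
lemma iso_of_equiv {w₁ : ι → k} {w₂ : κ → k} (e : κ ≃ ι) (hw : ∀ j, w₂ j = w₁ (e j)) :
    Iso w₁ w₂ := by
  refine ⟨LinearEquiv.funCongrLeft k k e, fun x => ?_⟩
  rw [Qw_apply, Qw_apply]
  rw [← Equiv.sum_comp e (fun i => w₁ i * (x i * x i))]
  refine Finset.sum_congr rfl fun j _ => ?_
  rw [hw]
  rfl

lemma iso_sum {w₁ : ι → k} {w₂ : κ → k} {w₁' : ι' → k} {w₂' : κ' → k}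
    (h₁ : Iso w₁ w₁') (h₂ : Iso w₂ w₂') :
    Iso (Sum.elim w₁ w₂) (Sum.elim w₁' w₂') := by
  obtain ⟨g₁, hg₁⟩ := h₁; obtain ⟨g₂, hg₂⟩ := h₂
  refine ⟨((LinearEquiv.sumArrowLequivProdArrow ι κ k k).trans
      ((g₁.prodCongr g₂).trans (LinearEquiv.sumArrowLequivProdArrow ι' κ' k k).symm)), fun x => ?_⟩
  rw [Qw_sum_apply, Qw_sum_apply]
  have h1 : ∀ (p : (ι' → k) × (κ' → k)),
      ((LinearEquiv.sumArrowLequivProdArrow ι' κ' k k).symm p) ∘ Sum.inl = p.1 := fun p => rfl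
  have h2 : ∀ (p : (ι' → k) × (κ' → k)),
      ((LinearEquiv.sumArrowLequivProdArrow ι' κ' k k).symm p) ∘ Sum.inr = p.2 := fun p => rfl
  simp only [LinearEquiv.trans_apply, h1, h2]
  have e1 : Sum.elim w₁' w₂' ∘ Sum.inl = w₁' := rfl
  have e2 : Sum.elim w₁' w₂' ∘ Sum.inr = w₂' := rfl
  have e3 : Sum.elim w₁ w₂ ∘ Sum.inl = w₁ := rfl
  have e4 : Sum.elim w₁ w₂ ∘ Sum.inr = w₂ := rfl
  rw [e1, e2, e3, e4]
  have : (g₁.prodCongr g₂) ((LinearEquiv.sumArrowLequivProdArrow ι κ k k) x)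
      = (g₁ (x ∘ Sum.inl), g₂ (x ∘ Sum.inr)) := rfl
  rw [this]
  simp only []
  rw [hg₁, hg₂]

lemma iso_sum_comm (w₁ : ι → k) (w₂ : κ → k) :
    Iso (Sum.elim w₁ w₂) (Sum.elim w₂ w₁) := by
  refine iso_of_equiv (Equiv.sumComm κ ι) ?_
  rintro (j | j) <;> rfl

lemma iso_sum_assoc (w₁ : ι → k) (w₂ : κ → k) (w₃ : γ → k) :
    Iso (Sum.elim (Sum.elim w₁ w₂) w₃) (Sum.elim w₁ (Sum.elim w₂ w₃)) := by
  refine iso_of_equiv (Equiv.sumAssoc ι κ γ).symm ?_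
  rintro (j | (j | j)) <;> rfl

end WIS

-- SECTION 3 : witt index calculus
namespace WIS
open Module QuadraticMap
variable {k : Type*} [Field k]
variable {ι κ γ ι' κ' : Type*} [Fintype ι] [Fintype κ] [Fintype γ] [Fintype ι'] [Fintype κ']

lemma finrank_map_inj {V V₂ : Type*} [AddCommGroup V] [Module k V] [AddCommGroup V₂]
    [Module k V₂] [FiniteDimensional k V] (f : V →ₗ[k] V₂) (hf : Function.Injective f)
    (U : Submodule k V) : finrank k (U.map f) = finrank k U := by
  have h1 := LinearMap.finrank_range_add_finrank_ker (f.comp U.subtype)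
  have hker : LinearMap.ker (f.comp U.subtype) = ⊥ := by
    rw [LinearMap.ker_eq_bot]; exact hf.comp U.injective_subtype
  have hrange : LinearMap.range (f.comp U.subtype) = U.map f := by
    rw [LinearMap.range_comp, Submodule.range_subtype]
  rw [hker, hrange, finrank_bot, add_zero] at h1
  exact h1

lemma Qw_add (w x y : ι → k) :
    Qw w (x + y) = Qw w x + Qw w y + ∑ i, 2 * (w i * (x i * y i)) := by
  simp only [Qw_apply, ← Finset.sum_add_distrib]
  refine Finset.sum_congr rfl fun i _ => ?_
  simp only [Pi.add_apply]
  ring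

/-- extension by zero on the left block -/
def extL : (ι → k) →ₗ[k] (ι ⊕ κ → k) where
  toFun x := Sum.elim x 0
  map_add' x y := by funext i; cases i <;> simp
  map_smul' c x := by funext i; cases i <;> simp

def extR : (κ → k) →ₗ[k] (ι ⊕ κ → k) where
  toFun x := Sum.elim 0 x
  map_add' x y := by funext i; cases i <;> simp
  map_smul' c x := by funext i; cases i <;> simp

@[simp] lemma extL_inl (x : ι → k) (i : ι) : (extL (κ := κ) x) (Sum.inl i) = x i := rfl
@[simp] lemma extL_inr (x : ι → k) (j : κ) : (extL x) (Sum.inr j : ι ⊕ κ) = 0 := rfl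
@[simp] lemma extR_inl (x : κ → k) (i : ι) : (extR x) (Sum.inl i : ι ⊕ κ) = 0 := rfl
@[simp] lemma extR_inr (x : κ → k) (j : κ) : (extR (ι := ι) x) (Sum.inr j) = x j := rfl

lemma extL_injective : Function.Injective (extL (k := k) (ι := ι) (κ := κ)) := by
  intro x y h; funext i; exact congrFun h (Sum.inl i)

lemma extR_injective : Function.Injective (extR (k := k) (ι := ι) (κ := κ)) := by
  intro x y h; funext j; exact congrFun h (Sum.inr j)

lemma comp_inl_extL (x : ι → k) : (extL (κ := κ) x) ∘ Sum.inl = x := rfl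
lemma comp_inr_extL (x : ι → k) : (extL (κ := κ) x) ∘ Sum.inr = (0 : κ → k) := rfl

/-- lower bound : witt index of an orthogonal sum -/
lemma wittIndex_sum_ge (w : ι ⊕ κ → k) :
    wittIndex k (Qw (w ∘ Sum.inl)) + wittIndex k (Qw (w ∘ Sum.inr)) ≤ wittIndex k (Qw w) := by
  obtain ⟨U₁, hU₁, hr₁⟩ := exists_wittIndex (Qw (w ∘ Sum.inl))
  obtain ⟨U₂, hU₂, hr₂⟩ := exists_wittIndex (Qw (w ∘ Sum.inr))
  set A := U₁.map (extL (κ := κ)) with hA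
  set B := U₂.map (extR (ι := ι)) with hB
  have hti : ∀ x ∈ A ⊔ B, Qw w x = 0 := by
    intro x hx
    obtain ⟨a, ha, b, hb, rfl⟩ := Submodule.mem_sup.mp hx
    obtain ⟨a₀, ha₀, rfl⟩ := ha
    obtain ⟨b₀, hb₀, rfl⟩ := hb
    rw [Qw_sum_apply]
    have h1 : (extL a₀ + extR b₀ : ι ⊕ κ → k) ∘ Sum.inl = a₀ := by funext i; simp
    have h2 : (extL a₀ + extR b₀ : ι ⊕ κ → k) ∘ Sum.inr = b₀ := by funext j; simp
    rw [h1, h2, hU₁ a₀ ha₀, hU₂ b₀ hb₀, add_zero]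
  have hinf : A ⊓ B = ⊥ := by
    rw [Submodule.eq_bot_iff]
    rintro x ⟨hxA, hxB⟩
    obtain ⟨a₀, -, rfl⟩ := hxA
    obtain ⟨b₀, -, h⟩ := hxB
    funext i
    cases i with
    | inl i =>
      have := congrFun h (Sum.inl i)
      simp only [extR_inl, extL_inl] at this
      simp [extL_inl, ← this]
    | inr j =>
      have := congrFun h (Sum.inr j)
      simp only [extR_inr, extL_inr] at this
      simp [this]
  have hr : finrank k (A ⊔ B : Submodule k (ι ⊕ κ → k)) = finrank k U₁ + finrank k U₂ := by
    have := Submodule.finrank_sup_add_finrank_inf_eq A B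
    rw [hinf, finrank_bot, add_zero] at this
    rw [this, hA, hB, finrank_map_inj _ extL_injective, finrank_map_inj _ extR_injective]
  calc wittIndex k (Qw (w ∘ Sum.inl)) + wittIndex k (Qw (w ∘ Sum.inr))
      = finrank k (A ⊔ B : Submodule k (ι ⊕ κ → k)) := by rw [hr, hr₁, hr₂]
    _ ≤ wittIndex k (Qw w) := le_wittIndex _ _ hti

/-- left block embeds -/
lemma wittIndex_inl_le (w : ι ⊕ κ → k) :
    wittIndex k (Qw (w ∘ Sum.inl)) ≤ wittIndex k (Qw w) := by
  refine wittIndex_le_of_map _ _ (extL (κ := κ)) extL_injective (fun x => ?_)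
  rw [Qw_sum_apply, comp_inl_extL, comp_inr_extL, map_zero, add_zero]

/-- anisotropic left block bounds the witt index by the size of the right block -/
lemma wittIndex_le_card (w : ι ⊕ κ → k)
    (ha : ∀ x, Qw (w ∘ Sum.inl) x = 0 → x = 0) :
    wittIndex k (Qw w) ≤ Fintype.card κ := by
  obtain ⟨U, hU, hr⟩ := exists_wittIndex (Qw w)
  rw [← hr]
  set ρ : (ι ⊕ κ → k) →ₗ[k] (κ → k) := LinearMap.funLeft k k Sum.inr with hρ
  have hinj : Function.Injective (ρ.comp U.subtype) := by
    rw [← LinearMap.ker_eq_bot, Submodule.eq_bot_iff]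
    rintro ⟨x, hx⟩ hker
    have hxr : x ∘ Sum.inr = 0 := hker
    have h0 : Qw w x = 0 := hU x hx
    rw [Qw_sum_apply, hxr, map_zero, add_zero] at h0
    have := ha _ h0
    have hx0 : x = 0 := by
      funext i
      cases i with
      | inl i => exact congrFun this i
      | inr j => exact congrFun hxr j
    exact Subtype.ext hx0
  calc finrank k U = finrank k (LinearMap.range (ρ.comp U.subtype)) := by
        have h1 := LinearMap.finrank_range_add_finrank_ker (ρ.comp U.subtype)
        rw [LinearMap.ker_eq_bot.mpr hinj, finrank_bot, add_zero] at h1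
        exact h1.symm
    _ ≤ finrank k (κ → k) := Submodule.finrank_le _
    _ = Fintype.card κ := by rw [Module.finrank_pi]

lemma wittIndex_anisotropic (w : ι → k) (ha : ∀ x, Qw w x = 0 → x = 0) :
    wittIndex k (Qw w) = 0 :=
  wittIndex_eq_zero _ ha

end WIS

-- SECTION 4 : cancellation
namespace WIS
open Module QuadraticMap
variable {k : Type*} [Field k]
variable {ι κ : Type*} [Fintype ι] [Fintype κ]

lemma finrank_map_add {V V₂ : Type*} [AddCommGroup V] [Module k V] [AddCommGroup V₂]
    [Module k V₂] [FiniteDimensional k V] (f : V →ₗ[k] V₂) (U : Submodule k V) :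
    finrank k (U.map f) + finrank k (U ⊓ LinearMap.ker f : Submodule k V) = finrank k U := by
  have h1 := LinearMap.finrank_range_add_finrank_ker (f.comp U.subtype)
  have hrange : LinearMap.range (f.comp U.subtype) = U.map f := by
    rw [LinearMap.range_comp, Submodule.range_subtype]
  have hker : LinearMap.ker (f.comp U.subtype) = (LinearMap.ker f).comap U.subtype := by
    rw [LinearMap.ker_comp]
  have h2 : finrank k ((LinearMap.ker f).comap U.subtype : Submodule k U)
      = finrank k (U ⊓ LinearMap.ker f : Submodule k V) := by
    rw [← finrank_map_inj (U.subtype) U.injective_subtype, Submodule.map_comap_subtype,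
      inf_comm]
  rw [hrange, hker, h2] at h1
  exact h1

/-- the standard isotropic vector in a split pair -/
private def ee : ι ⊕ (Unit ⊕ Unit) → k := Sum.elim 0 (Sum.elim (fun _ => 1) (fun _ => 1))

lemma Qw_pair_apply (w : ι ⊕ (Unit ⊕ Unit) → k) (x : Unit ⊕ Unit → k) :
    Qw (w ∘ Sum.inr) x = w (Sum.inr (Sum.inl ())) * (x (Sum.inl ()) * x (Sum.inl ()))
      + w (Sum.inr (Sum.inr ())) * (x (Sum.inr ()) * x (Sum.inr ())) := by
  rw [Qw_apply, Fintype.sum_sum_type]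
  simp

lemma cancel_le (h2 : (2 : k) ≠ 0) (w : ι ⊕ (Unit ⊕ Unit) → k) (α : k) (hα : α ≠ 0)
    (hw1 : w (Sum.inr (Sum.inl ())) = α) (hw2 : w (Sum.inr (Sum.inr ())) = -α) :
    wittIndex k (Qw w) ≤ 1 + wittIndex k (Qw (w ∘ Sum.inl)) := by
  classical
  obtain ⟨U, hU, hr⟩ := exists_wittIndex (Qw w)
  rw [← hr]
  set ℓ : (ι ⊕ (Unit ⊕ Unit) → k) →ₗ[k] k :=
    α • ((LinearMap.proj (R := k) (φ := fun _ : ι ⊕ (Unit ⊕ Unit) => k) (Sum.inr (Sum.inl ())))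
      - (LinearMap.proj (R := k) (φ := fun _ : ι ⊕ (Unit ⊕ Unit) => k)
          (Sum.inr (Sum.inr ())))) with hℓ
  have hℓ_apply : ∀ x : ι ⊕ (Unit ⊕ Unit) → k,
      ℓ x = α * (x (Sum.inr (Sum.inl ())) - x (Sum.inr (Sum.inr ()))) := fun x => rfl
  set π : (ι ⊕ (Unit ⊕ Unit) → k) →ₗ[k] (ι → k) := LinearMap.funLeft k k Sum.inl with hπ
  have hπ_apply : ∀ x, π x = x ∘ Sum.inl := fun _ => rfl
  have key : ∀ x : ι ⊕ (Unit ⊕ Unit) → k, ℓ x = 0 →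
      Qw w x = Qw (w ∘ Sum.inl) (x ∘ Sum.inl) := by
    intro x hx
    rw [hℓ_apply] at hx
    have hxx : x (Sum.inr (Sum.inl ())) = x (Sum.inr (Sum.inr ())) :=
      sub_eq_zero.mp ((mul_eq_zero.mp hx).resolve_left hα)
    rw [Qw_sum_apply, Qw_pair_apply, hw1, hw2]
    have hc1 : (x ∘ Sum.inr) (Sum.inl ()) = (x ∘ Sum.inr) (Sum.inr ()) := hxx
    rw [hc1]
    ring
  have heene : (ee : ι ⊕ (Unit ⊕ Unit) → k) ≠ 0 := by
    intro h
    have := congrFun h (Sum.inr (Sum.inl ()))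
    simp [ee] at this
  have hee : Qw w (ee : ι ⊕ (Unit ⊕ Unit) → k) = 0 := by
    rw [key _ (by rw [hℓ_apply]; simp [ee])]
    have h0 : (ee : ι ⊕ (Unit ⊕ Unit) → k) ∘ Sum.inl = 0 := rfl
    rw [h0, map_zero]
  have hpolar : ∀ y, Qw w ((ee : ι ⊕ (Unit ⊕ Unit) → k) + y) = Qw w y + 2 * ℓ y := by
    intro y
    rw [Qw_add, hee, zero_add, hℓ_apply]
    congr 1
    rw [Fintype.sum_sum_type]
    have h0 : ∀ i : ι, 2 * (w (Sum.inl i) * ((ee : ι ⊕ (Unit ⊕ Unit) → k) (Sum.inl i)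
        * y (Sum.inl i))) = 0 := by intro i; simp [ee]
    rw [Finset.sum_congr rfl (fun i _ => h0 i), Finset.sum_const_zero, zero_add,
      Fintype.sum_sum_type]
    simp only [Finset.univ_unique, Finset.sum_singleton]
    have e1 : (ee : ι ⊕ (Unit ⊕ Unit) → k) (Sum.inr (Sum.inl PUnit.unit)) = 1 := rfl
    have e2 : (ee : ι ⊕ (Unit ⊕ Unit) → k) (Sum.inr (Sum.inr PUnit.unit)) = 1 := rfl
    rw [e1, e2, hw1, hw2]
    ring
  set U₀ : Submodule k (ι ⊕ (Unit ⊕ Unit) → k) := U ⊓ LinearMap.ker ℓ with hU₀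
  set W : Submodule k (ι → k) := U₀.map π with hW
  -- W is totally isotropic for the restricted form
  have hWti : ∀ y ∈ W, Qw (w ∘ Sum.inl) y = 0 := by
    rintro y ⟨x, hx, rfl⟩
    obtain ⟨hxU, hxℓ⟩ := hx
    rw [hπ_apply, ← key x (LinearMap.mem_ker.mp hxℓ)]
    exact hU x hxU
  have hWrank : wittIndex k (Qw (w ∘ Sum.inl)) ≥ finrank k W := le_wittIndex _ _ hWti
  -- dimension bookkeeping
  have hd1 : finrank k (U.map ℓ) + finrank k U₀ = finrank k U := finrank_map_add ℓ U
  have hd2 : finrank k W + finrank k (U₀ ⊓ LinearMap.ker π : _) = finrank k U₀ :=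
    finrank_map_add π U₀
  have hsub : (U₀ ⊓ LinearMap.ker π : Submodule k _) ≤ k ∙ (ee : ι ⊕ (Unit ⊕ Unit) → k) := by
    rintro x ⟨⟨hxU, hxℓ⟩, hxπ⟩
    have hxinl : x ∘ Sum.inl = 0 := hxπ
    have hxℓ' : ℓ x = 0 := hxℓ
    rw [hℓ_apply] at hxℓ'
    have hxx : x (Sum.inr (Sum.inl ())) = x (Sum.inr (Sum.inr ())) :=
      sub_eq_zero.mp ((mul_eq_zero.mp hxℓ').resolve_left hα)
    refine Submodule.mem_span_singleton.mpr ⟨x (Sum.inr (Sum.inl ())), ?_⟩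
    funext i
    cases i with
    | inl i =>
      have h0 : x (Sum.inl i) = 0 := congrFun hxinl i
      simp [ee, h0]
    | inr j =>
      cases j with
      | inl u => simp [ee]
      | inr u => simp [ee, ← hxx]
  by_cases hcase : ∀ y ∈ U, ℓ y = 0
  · have hmap : U.map ℓ = ⊥ := by
      rw [Submodule.eq_bot_iff]
      rintro c ⟨y, hy, rfl⟩
      exact hcase y hy
    rw [hmap, finrank_bot, zero_add] at hd1
    have : finrank k (U₀ ⊓ LinearMap.ker π : Submodule k _) ≤ 1 := by
      calc finrank k (U₀ ⊓ LinearMap.ker π : Submodule k _)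
          ≤ finrank k (k ∙ (ee : ι ⊕ (Unit ⊕ Unit) → k)) := Submodule.finrank_mono hsub
        _ = 1 := finrank_span_singleton heene
    omega
  · push_neg at hcase
    obtain ⟨y₀, hy₀U, hy₀⟩ := hcase
    have hinf0 : (U₀ ⊓ LinearMap.ker π : Submodule k _) = ⊥ := by
      rw [Submodule.eq_bot_iff]
      intro x hx
      by_contra hx0
      obtain ⟨c, hc⟩ := Submodule.mem_span_singleton.mp (hsub hx)
      have hcne : c ≠ 0 := by rintro rfl; simp at hc; exact hx0 hc.symm
      have heU : (ee : ι ⊕ (Unit ⊕ Unit) → k) ∈ U := by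
        have hxU : x ∈ U := hx.1.1
        have : (ee : ι ⊕ (Unit ⊕ Unit) → k) = c⁻¹ • x := by
          rw [← hc, smul_smul, inv_mul_cancel₀ hcne, one_smul]
        rw [this]
        exact U.smul_mem _ hxU
      have : Qw w ((ee : ι ⊕ (Unit ⊕ Unit) → k) + y₀) = 0 :=
        hU _ (U.add_mem heU hy₀U)
      rw [hpolar y₀, hU y₀ hy₀U, zero_add] at this
      exact (mul_ne_zero h2 hy₀) this
    rw [hinf0, finrank_bot, add_zero] at hd2
    have : finrank k (U.map ℓ) ≤ 1 := by
      calc finrank k (U.map ℓ) ≤ finrank k k := Submodule.finrank_le _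
        _ = 1 := finrank_self k
    omega

lemma cancel_ge (w : ι ⊕ (Unit ⊕ Unit) → k) (α : k)
    (hw1 : w (Sum.inr (Sum.inl ())) = α) (hw2 : w (Sum.inr (Sum.inr ())) = -α) :
    1 + wittIndex k (Qw (w ∘ Sum.inl)) ≤ wittIndex k (Qw w) := by
  classical
  obtain ⟨U, hU, hr⟩ := exists_wittIndex (Qw (w ∘ Sum.inl))
  rw [← hr]
  set A : Submodule k (ι ⊕ (Unit ⊕ Unit) → k) := U.map (extL (κ := Unit ⊕ Unit)) with hA
  set B : Submodule k (ι ⊕ (Unit ⊕ Unit) → k) := k ∙ (ee : ι ⊕ (Unit ⊕ Unit) → k) with hB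
  have heene : (ee : ι ⊕ (Unit ⊕ Unit) → k) ≠ 0 := by
    intro h
    have := congrFun h (Sum.inr (Sum.inl ()))
    simp [ee] at this
  have hti : ∀ x ∈ A ⊔ B, Qw w x = 0 := by
    intro x hx
    obtain ⟨a, ha, b, hb, rfl⟩ := Submodule.mem_sup.mp hx
    obtain ⟨a₀, ha₀, rfl⟩ := ha
    obtain ⟨c, rfl⟩ := Submodule.mem_span_singleton.mp hb
    rw [Qw_sum_apply]
    have h1 : (extL a₀ + c • (ee : ι ⊕ (Unit ⊕ Unit) → k)) ∘ Sum.inl = a₀ := by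
      funext i; simp [ee]
    have h2 : (extL a₀ + c • (ee : ι ⊕ (Unit ⊕ Unit) → k)) ∘ Sum.inr
        = fun _ => c := by
      funext j; cases j <;> simp [ee]
    rw [h1, h2, hU a₀ ha₀, zero_add, Qw_pair_apply, hw1, hw2]
    ring
  have hinf : A ⊓ B = ⊥ := by
    rw [Submodule.eq_bot_iff]
    rintro x ⟨hxA, hxB⟩
    obtain ⟨a₀, -, rfl⟩ := hxA
    obtain ⟨c, hc⟩ := Submodule.mem_span_singleton.mp hxB
    have : c = 0 := by
      have := congrFun hc (Sum.inr (Sum.inl ()))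
      simpa [ee] using this
    rw [this, zero_smul] at hc
    exact hc.symm
  have hrk : finrank k (A ⊔ B : Submodule k _) = finrank k U + 1 := by
    have := Submodule.finrank_sup_add_finrank_inf_eq A B
    rw [hinf, finrank_bot, add_zero] at this
    rw [this, hA, finrank_map_inj _ extL_injective, hB, finrank_span_singleton heene]
  calc 1 + finrank k U = finrank k (A ⊔ B : Submodule k _) := by omega
    _ ≤ wittIndex k (Qw w) := le_wittIndex _ _ hti

lemma cancel_eq (h2 : (2 : k) ≠ 0) (w : ι ⊕ (Unit ⊕ Unit) → k) (α : k) (hα : α ≠ 0)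
    (hw1 : w (Sum.inr (Sum.inl ())) = α) (hw2 : w (Sum.inr (Sum.inr ())) = -α) :
    wittIndex k (Qw w) = 1 + wittIndex k (Qw (w ∘ Sum.inl)) :=
  le_antisymm (cancel_le h2 w α hα hw1 hw2) (cancel_ge w α hw1 hw2)

end WIS

-- SECTION 5 : iterated cancellation
namespace WIS
open Module QuadraticMap
variable {k : Type*} [Field k]
variable {ι κ : Type*} [Fintype ι] [Fintype κ]

/-- shuffle equivalence for peeling off the last hyperbolic pair -/
def peelEquiv (ι : Type*) (p : ℕ) :
    (ι ⊕ (Fin p ⊕ Fin p)) ⊕ (Unit ⊕ Unit) ≃ ι ⊕ (Fin (p + 1) ⊕ Fin (p + 1)) where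
  toFun := Sum.elim
    (Sum.elim (fun i => Sum.inl i)
      (Sum.elim (fun j => Sum.inr (Sum.inl j.castSucc)) (fun j => Sum.inr (Sum.inr j.castSucc))))
    (Sum.elim (fun _ => Sum.inr (Sum.inl (Fin.last p))) (fun _ => Sum.inr (Sum.inr (Fin.last p))))
  invFun := Sum.elim (fun i => Sum.inl (Sum.inl i))
    (Sum.elim
      (fun j => Fin.lastCases (Sum.inr (Sum.inl ()))
        (fun j₀ => Sum.inl (Sum.inr (Sum.inl j₀))) j)
      (fun j => Fin.lastCases (Sum.inr (Sum.inr ()))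
        (fun j₀ => Sum.inl (Sum.inr (Sum.inr j₀))) j))
  left_inv := by
    rintro ((i | (j | j)) | (u | u)) <;>
      simp [Fin.lastCases_castSucc, Fin.lastCases_last]
  right_inv := by
    rintro (i | (j | j))
    · rfl
    · induction j using Fin.lastCases with
      | last => simp [Fin.lastCases_last]
      | cast j₀ => simp [Fin.lastCases_castSucc]
    · induction j using Fin.lastCases with
      | last => simp [Fin.lastCases_last]
      | cast j₀ => simp [Fin.lastCases_castSucc]

lemma canceln_fin (h2 : (2 : k) ≠ 0) (p : ℕ) (w : ι ⊕ (Fin p ⊕ Fin p) → k)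
    (hpair : ∀ j : Fin p, w (Sum.inr (Sum.inl j)) ≠ 0
      ∧ w (Sum.inr (Sum.inr j)) = - w (Sum.inr (Sum.inl j))) :
    wittIndex k (Qw w) = p + wittIndex k (Qw (w ∘ Sum.inl)) := by
  induction p with
  | zero =>
    have : Iso w (w ∘ Sum.inl) := by
      refine iso_of_equiv (Equiv.sumEmpty ι (Fin 0 ⊕ Fin 0)).symm ?_
      intro j; rfl
    rw [this.wittIndex_eq]; omega
  | succ p ih =>
    set w' : (ι ⊕ (Fin p ⊕ Fin p)) ⊕ (Unit ⊕ Unit) → k := w ∘ (peelEquiv ι p) with hw'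
    have hiso : Iso w w' := iso_of_equiv (peelEquiv ι p) (fun j => rfl)
    have h1 : wittIndex k (Qw w') = 1 + wittIndex k (Qw (w' ∘ Sum.inl)) := by
      refine cancel_eq h2 w' (w (Sum.inr (Sum.inl (Fin.last p)))) (hpair (Fin.last p)).1 rfl ?_
      have : w' (Sum.inr (Sum.inr ())) = w (Sum.inr (Sum.inr (Fin.last p))) := rfl
      rw [this, (hpair (Fin.last p)).2]
    have h2' : wittIndex k (Qw (w' ∘ Sum.inl)) = p + wittIndex k (Qw ((w' ∘ Sum.inl) ∘ Sum.inl)) := by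
      refine ih (w' ∘ Sum.inl) (fun j => ?_)
      constructor
      · exact (hpair j.castSucc).1
      · exact (hpair j.castSucc).2
    have h3 : ((w' ∘ Sum.inl) ∘ Sum.inl) = w ∘ Sum.inl := rfl
    rw [hiso.wittIndex_eq, h1, h2', h3]
    omega

lemma canceln (h2 : (2 : k) ≠ 0) (w : ι ⊕ (κ ⊕ κ) → k)
    (hpair : ∀ j : κ, w (Sum.inr (Sum.inl j)) ≠ 0
      ∧ w (Sum.inr (Sum.inr j)) = - w (Sum.inr (Sum.inl j))) :
    wittIndex k (Qw w) = Fintype.card κ + wittIndex k (Qw (w ∘ Sum.inl)) := by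
  classical
  set e₀ := Fintype.equivFin κ with he₀
  set E : ι ⊕ (Fin (Fintype.card κ) ⊕ Fin (Fintype.card κ)) ≃ ι ⊕ (κ ⊕ κ) :=
    Equiv.sumCongr (Equiv.refl ι) (Equiv.sumCongr e₀.symm e₀.symm) with hE
  have hiso : Iso w (w ∘ E) := iso_of_equiv E (fun j => rfl)
  have h1 : wittIndex k (Qw (w ∘ E)) = Fintype.card κ + wittIndex k (Qw ((w ∘ E) ∘ Sum.inl)) := by
    refine canceln_fin h2 _ (w ∘ E) (fun j => ?_)
    have ha : (w ∘ E) (Sum.inr (Sum.inl j)) = w (Sum.inr (Sum.inl (e₀.symm j))) := rfl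
    have hb : (w ∘ E) (Sum.inr (Sum.inr j)) = w (Sum.inr (Sum.inr (e₀.symm j))) := rfl
    rw [ha, hb]
    exact hpair (e₀.symm j)
  have h3 : ((w ∘ E) ∘ Sum.inl) = w ∘ Sum.inl := rfl
  rw [hiso.wittIndex_eq, h1, h3]

end WIS

-- SECTION 6 : similarity and roundness
namespace WIS
open Module QuadraticMap
variable {k : Type*} [Field k]
variable {ι κ : Type*} [Fintype ι] [Fintype κ]

/-- similarity factor -/
def Sim (w : ι → k) (t : k) : Prop :=
  ∃ g : (ι → k) ≃ₗ[k] (ι → k), ∀ x, Qw w (g x) = t * Qw w x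

lemma Sim.mul {w : ι → k} {s t : k} (hs : Sim w s) (ht : Sim w t) : Sim w (s * t) := by
  obtain ⟨g, hg⟩ := hs; obtain ⟨f, hf⟩ := ht
  exact ⟨f.trans g, fun x => by
    rw [LinearEquiv.trans_apply, hg, hf]; ring⟩

lemma Sim.inv {w : ι → k} {t : k} (htne : t ≠ 0) (ht : Sim w t) : Sim w t⁻¹ := by
  obtain ⟨g, hg⟩ := ht
  refine ⟨g.symm, fun x => ?_⟩
  have h := hg (g.symm x)
  rw [g.apply_symm_apply] at h
  rw [h, ← mul_assoc, inv_mul_cancel₀ htne, one_mul]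

lemma Sim.sq (w : ι → k) (c : k) (hc : c ≠ 0) : Sim w (c * c) := by
  refine ⟨LinearEquiv.smulOfNeZero k _ c hc, fun x => ?_⟩
  have : (LinearEquiv.smulOfNeZero k _ c hc) x = c • x := rfl
  rw [this, QuadraticMap.map_smul, smul_eq_mul]

lemma sim_of_iso {w₁ : ι → k} {w₂ : κ → k} (h : Iso w₁ w₂) {t : k} (ht : Sim w₁ t) :
    Sim w₂ t := by
  obtain ⟨g, hg⟩ := h; obtain ⟨f, hf⟩ := ht
  refine ⟨(g.symm.trans f).trans g, fun x => ?_⟩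
  have h1 : ((g.symm.trans f).trans g) x = g (f (g.symm x)) := rfl
  rw [h1, hg, hf]
  congr 1
  have h2 : Qw w₁ (g.symm x) = Qw w₂ (g (g.symm x)) := (hg _).symm
  rw [h2, g.apply_symm_apply]

/-- the double of a form : `w ⊥ b·w` -/
def db (w : ι → k) (b : k) : ι ⊕ ι → k := Sum.elim w (fun i => b * w i)

lemma Qw_scaleW (b : k) (w : ι → k) (x : ι → k) :
    Qw (fun i => b * w i) x = b * Qw w x := by
  rw [Qw_apply, Qw_apply, Finset.mul_sum]
  exact Finset.sum_congr rfl fun i _ => by ring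

lemma Qw_db_apply (w : ι → k) (b : k) (v : ι ⊕ ι → k) :
    Qw (db w b) v = Qw w (v ∘ Sum.inl) + b * Qw w (v ∘ Sum.inr) := by
  rw [db, Qw_sum_apply]
  congr 1
  · exact Qw_scaleW b w _

/-- glue two equivalences blockwise -/
def glueEquiv (g₁ g₂ : (ι → k) ≃ₗ[k] (ι → k)) : (ι ⊕ ι → k) ≃ₗ[k] (ι ⊕ ι → k) :=
  (LinearEquiv.sumArrowLequivProdArrow ι ι k k).trans
    ((g₁.prodCongr g₂).trans (LinearEquiv.sumArrowLequivProdArrow ι ι k k).symm)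

lemma glueEquiv_inl (g₁ g₂ : (ι → k) ≃ₗ[k] (ι → k)) (x : ι ⊕ ι → k) :
    (glueEquiv g₁ g₂ x) ∘ Sum.inl = g₁ (x ∘ Sum.inl) := rfl
lemma glueEquiv_inr (g₁ g₂ : (ι → k) ≃ₗ[k] (ι → k)) (x : ι ⊕ ι → k) :
    (glueEquiv g₁ g₂ x) ∘ Sum.inr = g₂ (x ∘ Sum.inr) := rfl

/-- glue two equivalences blockwise, with a swap -/
def swapGlueEquiv (g₁ g₂ : (ι → k) ≃ₗ[k] (ι → k)) : (ι ⊕ ι → k) ≃ₗ[k] (ι ⊕ ι → k) :=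
  (LinearEquiv.sumArrowLequivProdArrow ι ι k k).trans
    ((LinearEquiv.prodComm k _ _).trans
      ((g₁.prodCongr g₂).trans (LinearEquiv.sumArrowLequivProdArrow ι ι k k).symm))

lemma swapGlueEquiv_inl (g₁ g₂ : (ι → k) ≃ₗ[k] (ι → k)) (x : ι ⊕ ι → k) :
    (swapGlueEquiv g₁ g₂ x) ∘ Sum.inl = g₁ (x ∘ Sum.inr) := rfl
lemma swapGlueEquiv_inr (g₁ g₂ : (ι → k) ≃ₗ[k] (ι → k)) (x : ι ⊕ ι → k) :
    (swapGlueEquiv g₁ g₂ x) ∘ Sum.inr = g₂ (x ∘ Sum.inl) := rfl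

lemma sim_lift {w : ι → k} (b : k) {t : k} (ht : Sim w t) : Sim (db w b) t := by
  obtain ⟨g, hg⟩ := ht
  refine ⟨glueEquiv g g, fun x => ?_⟩
  rw [Qw_db_apply, Qw_db_apply, glueEquiv_inl, glueEquiv_inr, hg, hg]
  ring

/-- transport roundness along an isometry -/
lemma round_of_iso {w₁ : ι → k} {w₂ : κ → k} (h : Iso w₁ w₂)
    (hr : ∀ v, Qw w₁ v ≠ 0 → Sim w₁ (Qw w₁ v)) :
    ∀ v, Qw w₂ v ≠ 0 → Sim w₂ (Qw w₂ v) := by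
  intro v hv
  obtain ⟨g, hg⟩ := h
  have hval : Qw w₁ (g.symm v) = Qw w₂ v := by
    conv_rhs => rw [← g.apply_symm_apply v, hg]
  exact sim_of_iso ⟨g, hg⟩ (hval ▸ hr (g.symm v) (by rw [hval]; exact hv))

/-- the binary chain equivalence : `⟨1,b⟩ ≃ (1+b)·⟨1,b⟩` componentwise over `w` -/
lemma sim_db_one_add {w : ι → k} (b : k) (hb : b ≠ 0) (he : 1 + b ≠ 0) :
    Sim (db w b) (1 + b) := by
  set e := 1 + b with hee
  -- the linear maps on the product
  set F : (ι → k) × (ι → k) →ₗ[k] (ι → k) × (ι → k) :=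
    LinearMap.prod (e⁻¹ • (LinearMap.fst k _ _ + b • LinearMap.snd k _ _))
      (e⁻¹ • (LinearMap.fst k _ _ - LinearMap.snd k _ _)) with hF
  set G : (ι → k) × (ι → k) →ₗ[k] (ι → k) × (ι → k) :=
    LinearMap.prod (LinearMap.fst k _ _ + b • LinearMap.snd k _ _)
      (LinearMap.fst k _ _ - LinearMap.snd k _ _) with hG
  have hFG : F.comp G = LinearMap.id := by
    apply LinearMap.ext
    rintro ⟨x, y⟩
    have h1 : e⁻¹ • ((x + b • y) + b • (x - y)) = x := by
      have hx : (x + b • y) + b • (x - y) = e • x := by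
        rw [hee, add_smul, one_smul, smul_sub]; abel
      rw [hx, smul_smul, inv_mul_cancel₀ he, one_smul]
    have h2 : e⁻¹ • ((x + b • y) - (x - y)) = y := by
      have : (x + b • y) - (x - y) = e • y := by
        rw [hee, add_smul, one_smul]; abel
      rw [this, smul_smul, inv_mul_cancel₀ he, one_smul]
    simp only [hF, hG, LinearMap.coe_comp, Function.comp_apply, LinearMap.prod_apply,
      LinearMap.coe_smul, Pi.smul_apply, LinearMap.add_apply, LinearMap.sub_apply,
      LinearMap.fst_apply, LinearMap.snd_apply, LinearMap.id_apply, LinearMap.smul_apply]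
    exact Prod.ext h1 h2
  have hGF : G.comp F = LinearMap.id := by
    apply LinearMap.ext
    rintro ⟨x, y⟩
    have h1 : (e⁻¹ • (x + b • y)) + b • (e⁻¹ • (x - y)) = x := by
      rw [smul_smul, mul_comm b e⁻¹, ← smul_smul e⁻¹ b, ← smul_add]
      have hx : (x + b • y) + b • (x - y) = e • x := by
        rw [hee, add_smul, one_smul, smul_sub]; abel
      rw [hx, smul_smul, inv_mul_cancel₀ he, one_smul]
    have h2 : (e⁻¹ • (x + b • y)) - (e⁻¹ • (x - y)) = y := by
      rw [← smul_sub]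
      have : (x + b • y) - (x - y) = e • y := by
        rw [hee, add_smul, one_smul]; abel
      rw [this, smul_smul, inv_mul_cancel₀ he, one_smul]
    simp only [hF, hG, LinearMap.coe_comp, Function.comp_apply, LinearMap.prod_apply,
      LinearMap.coe_smul, Pi.smul_apply, LinearMap.add_apply, LinearMap.sub_apply,
      LinearMap.fst_apply, LinearMap.snd_apply, LinearMap.id_apply, LinearMap.smul_apply]
    exact Prod.ext h1 h2
  set mid : ((ι → k) × (ι → k)) ≃ₗ[k] ((ι → k) × (ι → k)) := LinearEquiv.ofLinear F G hFG hGF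
  set A := LinearEquiv.sumArrowLequivProdArrow ι ι k k
  -- the similarity with factor e⁻¹
  have base : Sim (db w b) e⁻¹ := by
    refine ⟨A.trans (mid.trans A.symm), fun x => ?_⟩
    have hinl : ((A.trans (mid.trans A.symm)) x) ∘ Sum.inl
        = e⁻¹ • ((x ∘ Sum.inl) + b • (x ∘ Sum.inr)) := rfl
    have hinr : ((A.trans (mid.trans A.symm)) x) ∘ Sum.inr
        = e⁻¹ • ((x ∘ Sum.inl) - (x ∘ Sum.inr)) := rfl
    rw [Qw_db_apply, Qw_db_apply, hinl, hinr]
    rw [Qw_apply, Qw_apply, Qw_apply, Qw_apply]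
    simp only [mul_add, Finset.mul_sum]
    rw [← Finset.sum_add_distrib, ← Finset.sum_add_distrib]
    refine Finset.sum_congr rfl fun i _ => ?_
    simp only [Pi.smul_apply, Pi.add_apply, Pi.sub_apply, Function.comp_apply, smul_eq_mul]
    have hbne : e ≠ 0 := he
    field_simp
    ring
  have : Sim (db w b) (e⁻¹)⁻¹ := Sim.inv (inv_ne_zero he) base
  rwa [inv_inv] at this

/-- roundness is stable under the doubling construction -/
lemma round_step (w : ι → k) (b : k) (hb : b ≠ 0)
    (hround : ∀ v, Qw w v ≠ 0 → Sim w (Qw w v)) :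
    ∀ v, Qw (db w b) v ≠ 0 → Sim (db w b) (Qw (db w b) v) := by
  intro v hv
  rw [Qw_db_apply] at hv ⊢
  set x := v ∘ Sum.inl with hx
  set y := v ∘ Sum.inr with hy
  by_cases hty : Qw w y = 0
  · rw [hty, mul_zero, add_zero] at hv ⊢
    exact sim_lift b (hround x hv)
  · by_cases hux : Qw w x = 0
    · -- c = b * t : swap the two blocks
      rw [hux, zero_add] at hv ⊢
      obtain ⟨g, hg⟩ := hround y hty
      refine ⟨swapGlueEquiv ((LinearEquiv.smulOfNeZero k _ b hb).trans g) g, fun z => ?_⟩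
      rw [Qw_db_apply, Qw_db_apply, swapGlueEquiv_inl, swapGlueEquiv_inr]
      have h1 : Qw w (((LinearEquiv.smulOfNeZero k _ b hb).trans g) (z ∘ Sum.inr))
          = b * b * (Qw w y * Qw w (z ∘ Sum.inr)) := by
        have hstep : ((LinearEquiv.smulOfNeZero k _ b hb).trans g) (z ∘ Sum.inr)
            = g (b • (z ∘ Sum.inr)) := rfl
        rw [hstep, hg, QuadraticMap.map_smul, smul_eq_mul]
        ring
      rw [h1, hg]
      ring
    · -- the general case
      set b' := (Qw w x)⁻¹ * (b * Qw w y) with hb'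
      have hb'ne : b' ≠ 0 := by
        simp only [hb', ne_eq, mul_eq_zero, inv_eq_zero, not_or]
        exact ⟨hux, hb, hty⟩
      have hene : 1 + b' ≠ 0 := by
        intro h
        apply hv
        have hc : Qw w x + b * Qw w y = Qw w x * (1 + b') := by
          rw [hb']; field_simp
        rw [hc, h, mul_zero]
      have hiso : Iso (db w b) (db w b') := by
        obtain ⟨g, hg⟩ := Sim.mul (hround x hux) (Sim.inv hty (hround y hty))
        refine ⟨glueEquiv (LinearEquiv.refl k _) g, fun z => ?_⟩
        rw [Qw_db_apply, Qw_db_apply, glueEquiv_inl, glueEquiv_inr, hg]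
        have h0 : (LinearEquiv.refl k (ι → k)) (z ∘ Sum.inl) = z ∘ Sum.inl := rfl
        rw [h0, hb']
        field_simp
      have hsim_e : Sim (db w b) (1 + b') :=
        sim_of_iso hiso.symm (sim_db_one_add b' hb'ne hene)
      have hsim_u : Sim (db w b) (Qw w x) := sim_lift b (hround x hux)
      have hmul := Sim.mul hsim_u hsim_e
      have hval : Qw w x * (1 + b') = Qw w x + b * Qw w y := by
        rw [hb']; field_simp
      rwa [hval] at hmul

end WIS

-- SECTION 7 : Pfister forms
namespace WIS
open Module QuadraticMap
variable {k : Type*} [Field k]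
variable {ι κ : Type*} [Fintype ι] [Fintype κ]

/-- the diagonal weights of the Pfister form `⟪a₁,…,a_r⟫` -/
def pw (r : ℕ) (a : Fin r → k) : Finset (Fin r) → k := fun S => ∏ i ∈ S, (-a i)

lemma pw_ne_zero (r : ℕ) (a : Fin r → k) (ha : ∀ i, a i ≠ 0) (S : Finset (Fin r)) :
    pw r a S ≠ 0 :=
  Finset.prod_ne_zero_iff.mpr fun i _ => neg_ne_zero.mpr (ha i)

lemma pw_empty (r : ℕ) (a : Fin r → k) : pw r a ∅ = 1 := Finset.prod_empty

/-- pull back a finset along `castSucc` -/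
def pull {r : ℕ} (T : Finset (Fin (r + 1))) : Finset (Fin r) :=
  Finset.univ.filter (fun i : Fin r => i.castSucc ∈ T)

lemma mem_pull {r : ℕ} (T : Finset (Fin (r + 1))) (i : Fin r) :
    i ∈ pull T ↔ i.castSucc ∈ T := by simp [pull]

lemma pull_map {r : ℕ} (S : Finset (Fin r)) : pull (S.map Fin.castSuccEmb) = S := by
  ext i
  rw [mem_pull]
  exact Finset.mem_map' _

lemma last_not_mem_map {r : ℕ} (S : Finset (Fin r)) :
    Fin.last r ∉ S.map Fin.castSuccEmb := by
  rw [Finset.mem_map]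
  rintro ⟨i, -, hi⟩
  exact Fin.exists_castSucc_eq.mp ⟨i, hi⟩ rfl

lemma pull_insert {r : ℕ} (T : Finset (Fin (r + 1))) :
    pull (insert (Fin.last r) T) = pull T := by
  ext i
  rw [mem_pull, mem_pull, Finset.mem_insert]
  constructor
  · rintro (h | h)
    · exact absurd h (Fin.exists_castSucc_eq.mp ⟨i, rfl⟩)
    · exact h
  · exact Or.inr

lemma map_pull {r : ℕ} (T : Finset (Fin (r + 1))) :
    (pull T).map Fin.castSuccEmb = T.erase (Fin.last r) := by
  ext j
  rw [Finset.mem_map, Finset.mem_erase]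
  constructor
  · rintro ⟨i, hi, rfl⟩
    rw [mem_pull] at hi
    exact ⟨Fin.exists_castSucc_eq.mp ⟨i, rfl⟩, hi⟩
  · rintro ⟨hne, hj⟩
    obtain ⟨i, rfl⟩ := Fin.exists_castSucc_eq.mpr hne
    exact ⟨i, (mem_pull _ _).mpr hj, rfl⟩

/-- the splitting of subsets of `Fin (r+1)` according to whether they contain `last` -/
def finsetSuccEquiv (r : ℕ) : Finset (Fin r) ⊕ Finset (Fin r) ≃ Finset (Fin (r + 1)) where
  toFun := Sum.elim (fun S => S.map Fin.castSuccEmb)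
    (fun S => insert (Fin.last r) (S.map Fin.castSuccEmb))
  invFun T := if Fin.last r ∈ T then Sum.inr (pull T) else Sum.inl (pull T)
  left_inv := by
    rintro (S | S)
    · dsimp only [Sum.elim_inl]
      rw [if_neg (last_not_mem_map S), pull_map]
    · dsimp only [Sum.elim_inr]
      rw [if_pos (Finset.mem_insert_self _ _), pull_insert, pull_map]
  right_inv := by
    intro T
    dsimp only
    by_cases h : Fin.last r ∈ T
    · rw [if_pos h]
      simp only [Sum.elim_inr]
      rw [map_pull, Finset.insert_erase h]
    · rw [if_neg h]
      simp only [Sum.elim_inl]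
      rw [map_pull, Finset.erase_eq_of_notMem h]

lemma pw_succ (r : ℕ) (a : Fin (r + 1) → k) (j : Finset (Fin r) ⊕ Finset (Fin r)) :
    (db (pw r (a ∘ Fin.castSucc)) (-a (Fin.last r))) j = pw (r + 1) a (finsetSuccEquiv r j) := by
  cases j with
  | inl S =>
    show pw r (a ∘ Fin.castSucc) S = pw (r + 1) a (S.map Fin.castSuccEmb)
    rw [pw, pw, Finset.prod_map]
    rfl
  | inr S =>
    show -a (Fin.last r) * pw r (a ∘ Fin.castSucc) S
      = pw (r + 1) a (insert (Fin.last r) (S.map Fin.castSuccEmb))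
    rw [pw, pw, Finset.prod_insert (last_not_mem_map S), Finset.prod_map]
    rfl

lemma iso_pw_db (r : ℕ) (a : Fin (r + 1) → k) :
    Iso (pw (r + 1) a) (db (pw r (a ∘ Fin.castSucc)) (-a (Fin.last r))) :=
  iso_of_equiv (w₁ := pw (r + 1) a)
    (w₂ := db (pw r (a ∘ Fin.castSucc)) (-a (Fin.last r)))
    (finsetSuccEquiv r) (pw_succ r a)

lemma finset_fin_zero_eq (S : Finset (Fin 0)) : S = ∅ :=
  Finset.eq_empty_of_forall_notMem fun x _ => x.elim0

lemma Qw_pw_zero (a : Fin 0 → k) (v : Finset (Fin 0) → k) :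
    Qw (pw 0 a) v = v ∅ * v ∅ := by
  rw [Qw_apply]
  rw [Finset.sum_eq_single_of_mem ∅ (Finset.mem_univ _)]
  · rw [pw_empty, one_mul]
  · intro b _ hb
    exact absurd (finset_fin_zero_eq b) hb

lemma pw_zero_anisotropic (a : Fin 0 → k) : ∀ x, Qw (pw 0 a) x = 0 → x = 0 := by
  intro x hx
  rw [Qw_pw_zero] at hx
  have h0 : x ∅ = 0 := by
    rcases mul_eq_zero.mp hx with h | h <;> exact h
  funext S
  rw [finset_fin_zero_eq S, h0]
  rfl

theorem pfister_round (r : ℕ) (a : Fin r → k) (ha : ∀ i, a i ≠ 0) :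
    ∀ v, Qw (pw r a) v ≠ 0 → Sim (pw r a) (Qw (pw r a) v) := by
  induction r with
  | zero =>
    intro v hv
    rw [Qw_pw_zero] at hv ⊢
    have hvne : v ∅ ≠ 0 := by
      intro h; apply hv; rw [h, mul_zero]
    exact Sim.sq _ _ hvne
  | succ r ih =>
    have hb : -a (Fin.last r) ≠ 0 := neg_ne_zero.mpr (ha _)
    have hround := ih (a ∘ Fin.castSucc) (fun i => ha _)
    exact round_of_iso (iso_pw_db r a).symm
      (round_step _ _ hb hround)

lemma wittIndex_scale (b : k) (hb : b ≠ 0) (w : ι → k) :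
    wittIndex k (Qw (fun i => b * w i)) = wittIndex k (Qw w) := by
  unfold wittIndex
  congr 1
  ext m
  refine exists_congr fun U => and_congr_left' (forall_congr' fun x => forall_congr' fun _ => ?_)
  rw [Qw_scaleW]
  constructor
  · intro h
    rcases mul_eq_zero.mp h with h | h
    · exact absurd h hb
    · exact h
  · intro h; rw [h, mul_zero]

/-- an isotropic Pfister form has large witt index -/
theorem pfister_iso_lb (r : ℕ) (a : Fin r → k) (ha : ∀ i, a i ≠ 0)
    (hiso : ∃ x, x ≠ 0 ∧ Qw (pw r a) x = 0) :
    2 ^ r ≤ 2 * wittIndex k (Qw (pw r a)) := by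
  induction r with
  | zero =>
    obtain ⟨x, hx, h0⟩ := hiso
    exact absurd (pw_zero_anisotropic a x h0) hx
  | succ r ih =>
    set w := pw r (a ∘ Fin.castSucc) with hw
    set b := -a (Fin.last r) with hbdef
    have hb : b ≠ 0 := neg_ne_zero.mpr (ha _)
    have ha' : ∀ i : Fin r, (a ∘ Fin.castSucc) i ≠ 0 := fun i => ha _
    obtain ⟨g, hg⟩ := iso_pw_db r a
    have hWI : wittIndex k (Qw (pw (r + 1) a)) = wittIndex k (Qw (db w b)) :=
      (iso_pw_db r a).wittIndex_eq
    obtain ⟨x, hx, h0⟩ := hiso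
    have hgx : Qw (db w b) (g x) = 0 := by rw [hg]; exact h0
    have hgxne : g x ≠ 0 := fun h => hx (by
      have := congrArg g.symm h
      rwa [g.symm_apply_apply, map_zero] at this)
    rw [Qw_db_apply] at hgx
    set x₁ := (g x) ∘ Sum.inl with hx₁
    set y₁ := (g x) ∘ Sum.inr with hy₁
    by_cases hQx : Qw w x₁ = 0
    · -- w itself is isotropic
      have hQy : Qw w y₁ = 0 := by
        rw [hQx, zero_add] at hgx
        rcases mul_eq_zero.mp hgx with h | h
        · exact absurd h hb
        · exact h
      have hisow : ∃ z, z ≠ 0 ∧ Qw w z = 0 := by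
        by_cases hx1 : x₁ = 0
        · refine ⟨y₁, ?_, hQy⟩
          intro hy0
          apply hgxne
          funext i
          cases i with
          | inl i => exact congrFun hx1 i
          | inr i => exact congrFun hy0 i
        · exact ⟨x₁, hx1, hQx⟩
      have hIH := ih (a ∘ Fin.castSucc) ha' hisow
      rw [← hw] at hIH
      have hsum := wittIndex_sum_ge (db w b)
      have hl : (db w b) ∘ Sum.inl = w := rfl
      have hr' : (db w b) ∘ Sum.inr = fun i => b * w i := rfl
      rw [hl, hr', wittIndex_scale b hb w] at hsum
      rw [hWI]
      calc (2 : ℕ) ^ (r + 1) = 2 * 2 ^ r := by ring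
        _ ≤ 2 * (2 * wittIndex k (Qw w)) := by omega
        _ ≤ 2 * wittIndex k (Qw (db w b)) := by omega
    · -- both values nonzero : use the graph of a similarity
      have hQy : Qw w y₁ ≠ 0 := by
        intro h
        rw [h, mul_zero, add_zero] at hgx
        exact hQx hgx
      obtain ⟨f, hf⟩ := Sim.mul (pfister_round r _ ha' y₁ hQy)
        (Sim.inv hQx (pfister_round r _ ha' x₁ hQx))
      -- Qw w (f z) = t * u⁻¹ * Qw w z  where u + b t = 0
      set hmap : (Finset (Fin r) → k) →ₗ[k] (Finset (Fin r) ⊕ Finset (Fin r) → k) :=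
        ((LinearEquiv.sumArrowLequivProdArrow _ _ k k).symm.toLinearMap).comp
          (LinearMap.prod LinearMap.id f.toLinearMap) with hmapdef
      have hmap_inl : ∀ z, (hmap z) ∘ Sum.inl = z := fun z => rfl
      have hmap_inr : ∀ z, (hmap z) ∘ Sum.inr = f z := fun z => rfl
      have hinj : Function.Injective hmap := by
        intro z₁ z₂ h
        funext i
        exact congrFun h (Sum.inl i)
      have hti : ∀ v ∈ LinearMap.range hmap, Qw (db w b) v = 0 := by
        rintro v ⟨z, rfl⟩
        rw [Qw_db_apply, hmap_inl, hmap_inr, hf]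
        have hbt : b * Qw w y₁ = - Qw w x₁ := by linear_combination hgx
        have h1 : Qw w z + b * (Qw w y₁ * (Qw w x₁)⁻¹ * Qw w z)
            = Qw w z + (b * Qw w y₁) * ((Qw w x₁)⁻¹ * Qw w z) := by ring
        rw [h1, hbt]
        have h2 : Qw w x₁ * (Qw w x₁)⁻¹ = 1 := mul_inv_cancel₀ hQx
        linear_combination (-(Qw w z)) * h2
      have hdim : finrank k (LinearMap.range hmap) = 2 ^ r := by
        have h1 := LinearMap.finrank_range_add_finrank_ker hmap
        rw [LinearMap.ker_eq_bot.mpr hinj, finrank_bot, add_zero] at h1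
        rw [h1, Module.finrank_pi, Fintype.card_finset, Fintype.card_fin]
      have := le_wittIndex (Qw (db w b)) _ hti
      rw [hdim] at this
      rw [hWI]
      omega

end WIS

-- SECTION 8 : tensor forms
namespace WIS
open Module QuadraticMap
variable {k : Type*} [Field k]
variable {ι κ : Type*} [Fintype ι] [Fintype κ]

/-- the form `φ ⊗ ⟨c₁,…,c_s⟩` -/
def TF (w : ι → k) {s : ℕ} (c : Fin s → k) : ι × Fin s → k := fun p => w p.1 * c p.2

/-- the form `γ·φ` -/
def slice (w : ι → k) (γ : k) : ι → k := fun S => w S * γ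

lemma Qw_slice (w : ι → k) (γ : k) (x : ι → k) : Qw (slice w γ) x = γ * Qw w x := by
  rw [Qw_apply, Qw_apply, Finset.mul_sum]
  exact Finset.sum_congr rfl fun i _ => by rw [slice]; ring

lemma Qw_TF (w : ι → k) {s : ℕ} (c : Fin s → k) (x : ι × Fin s → k) :
    Qw (TF w c) x = ∑ j, c j * Qw w (fun S => x (S, j)) := by
  rw [Qw_apply, Fintype.sum_prod_type_right]
  refine Finset.sum_congr rfl fun j _ => ?_
  rw [Qw_apply, Finset.mul_sum]
  exact Finset.sum_congr rfl fun S _ => by rw [TF]; ring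

/-- similarity lifts to tensor forms -/
lemma sim_TF {w : ι → k} {t : k} (h : Sim w t) {s : ℕ} (c : Fin s → k) :
    Sim (TF w c) t := by
  obtain ⟨g, hg⟩ := h
  set E : ((ι × Fin s) → k) ≃ₗ[k] ((Fin s × ι) → k) :=
    LinearEquiv.funCongrLeft k k (Equiv.prodComm (Fin s) ι) with hE
  set C : ((Fin s × ι) → k) ≃ₗ[k] (Fin s → ι → k) := LinearEquiv.curry k k (Fin s) ι with hC
  set P : (Fin s → ι → k) ≃ₗ[k] (Fin s → ι → k) :=
    LinearEquiv.piCongrRight (fun _ : Fin s => g) with hP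
  set G := E.trans (C.trans (P.trans (C.symm.trans E.symm))) with hG
  have hcol : ∀ (x : ι × Fin s → k) (j : Fin s),
      (fun S => (G x) (S, j)) = g (fun S' => x (S', j)) := fun x j => rfl
  refine ⟨G, fun x => ?_⟩
  rw [Qw_TF, Qw_TF, Finset.mul_sum]
  refine Finset.sum_congr rfl fun j _ => ?_
  rw [hcol, hg]
  ring

/-- rescale a slice along a similarity -/
lemma iso_slice {w : ι → k} {t : k} (h : Sim w t) (γ' : k) :
    Iso (slice w (γ' * t)) (slice w γ') := by
  obtain ⟨g, hg⟩ := h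
  exact ⟨g, fun x => by rw [Qw_slice, Qw_slice, hg]; ring⟩

/-- peeling the first slot off a tensor form -/
def consEquiv (ι : Type*) (s : ℕ) : ι ⊕ (ι × Fin s) ≃ ι × Fin (s + 1) where
  toFun := Sum.elim (fun S => (S, 0)) (fun p => (p.1, p.2.succ))
  invFun p := Fin.cases (Sum.inl p.1) (fun j => Sum.inr (p.1, j)) p.2
  left_inv := by
    rintro (S | ⟨S, j⟩)
    · simp
    · simp
  right_inv := by
    rintro ⟨S, j⟩
    induction j using Fin.cases with
    | zero => simp
    | succ j => simp

lemma iso_TF_cons (w : ι → k) {s : ℕ} (γ : k) (c : Fin s → k) :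
    Iso (TF w (Fin.cons γ c)) (Sum.elim (slice w γ) (TF w c)) := by
  refine iso_of_equiv (w₁ := TF w (Fin.cons γ c)) (w₂ := Sum.elim (slice w γ) (TF w c))
    (consEquiv ι s) ?_
  rintro (S | ⟨S, j⟩)
  · simp [consEquiv, TF, slice]
  · simp [consEquiv, TF, slice]

/-- the binary chain move on two slices -/
lemma iso_two_slices (w : ι → k) (α β : k) (hα : α ≠ 0) (hβ : β ≠ 0) (hv : α + β ≠ 0) :
    Iso (Sum.elim (slice w α) (slice w β))
      (Sum.elim (slice w (α + β)) (slice w ((α + β) * β * α⁻¹))) := by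
  have hb' : β * α⁻¹ ≠ 0 := mul_ne_zero hβ (inv_ne_zero hα)
  have hEq : Sum.elim (slice w α) (slice w β) = db (slice w α) (β * α⁻¹) := by
    funext i
    cases i with
    | inl S => rfl
    | inr S =>
      show w S * β = β * α⁻¹ * (w S * α)
      field_simp
  have hene : 1 + β * α⁻¹ ≠ 0 := by
    intro h
    apply hv
    have : α * (1 + β * α⁻¹) = α + β := by field_simp
    rw [h, mul_zero] at this
    exact this.symm
  obtain ⟨g, hg⟩ := sim_db_one_add (w := slice w α) (β * α⁻¹) hb' hene
  have hW₂ : Sum.elim (slice w (α + β)) (slice w ((α + β) * β * α⁻¹))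
      = fun i => (1 + β * α⁻¹) * (db (slice w α) (β * α⁻¹)) i := by
    funext i
    cases i with
    | inl S =>
      show w S * (α + β) = (1 + β * α⁻¹) * (w S * α)
      field_simp
    | inr S =>
      show w S * ((α + β) * β * α⁻¹) = (1 + β * α⁻¹) * (β * α⁻¹ * (w S * α))
      field_simp
  rw [hEq]
  refine ⟨g.symm, fun x => ?_⟩
  rw [hW₂, Qw_scaleW]
  have h1 := hg (g.symm x)
  rw [g.apply_symm_apply] at h1
  rw [← h1]

/-- swap the first two blocks of a three fold sum -/
lemma iso_shuffle {γ₁ γ₂ γ₃ : Type*} [Fintype γ₁] [Fintype γ₂] [Fintype γ₃]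
    (w₁ : γ₁ → k) (w₂ : γ₂ → k) (w₃ : γ₃ → k) :
    Iso (Sum.elim w₁ (Sum.elim w₂ w₃)) (Sum.elim w₂ (Sum.elim w₁ w₃)) :=
  ((iso_sum_assoc w₁ w₂ w₃).symm.trans
    (iso_sum (iso_sum_comm w₁ w₂) (Iso.refl w₃))).trans (iso_sum_assoc w₂ w₁ w₃)

lemma TF_cons_self (w : ι → k) {s : ℕ} (c : Fin (s + 1) → k) :
    TF w c = TF w (Fin.cons (c 0) (Fin.tail c)) := by
  rw [Fin.cons_self_tail]

/-- value decomposition of a tensor form -/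
lemma Qw_TF_succ (w : ι → k) {s : ℕ} (c : Fin (s + 1) → k) (x : ι × Fin (s + 1) → k) :
    Qw (TF w c) x = c 0 * Qw w (fun S => x (S, 0))
      + Qw (TF w (Fin.tail c)) (fun p => x (p.1, p.2.succ)) := by
  rw [Qw_TF, Fin.sum_univ_succ, Qw_TF]
  rfl

/-- a nonzero represented value can be split off a tensor multiple of a round form -/
lemma split' (w : ι → k) (hround : ∀ v, Qw w v ≠ 0 → Sim w (Qw w v)) :
    ∀ (s : ℕ) (c : Fin (s + 1) → k), (∀ j, c j ≠ 0) →
    ∀ (x : ι × Fin (s + 1) → k), Qw (TF w c) x ≠ 0 →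
    ∃ c' : Fin s → k, (∀ j, c' j ≠ 0) ∧
      Iso (TF w c) (Sum.elim (slice w (Qw (TF w c) x)) (TF w c')) := by
  intro s
  induction s with
  | zero =>
    intro c hc x hv
    set v := Qw (TF w c) x with hvdef
    have hval : v = c 0 * Qw w (fun S => x (S, 0)) := by
      rw [hvdef, Qw_TF_succ]
      have : Qw (TF w (Fin.tail c)) (fun p : ι × Fin 0 => x (p.1, p.2.succ)) = 0 := by
        rw [Qw_TF, Fin.sum_univ_zero]
      rw [this, add_zero]
    have ht : Qw w (fun S => x (S, 0)) ≠ 0 := by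
      intro h; apply hv; rw [hval, h, mul_zero]
    refine ⟨Fin.elim0, fun j => j.elim0, ?_⟩
    have step1 : Iso (TF w c) (Sum.elim (slice w (c 0)) (TF w (Fin.tail c))) := by
      rw [TF_cons_self w c]
      exact iso_TF_cons w (c 0) (Fin.tail c)
    refine step1.trans (iso_sum ?_ ?_)
    · -- slice (c 0) ≅ slice v
      have h1 : c 0 = v * (Qw w (fun S => x (S, 0)))⁻¹ := by
        rw [hval]; field_simp
      have h2 := iso_slice (Sim.inv ht (hround _ ht)) v
      rw [← h1] at h2
      exact h2
    · -- empty tails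
      refine iso_of_equiv (Equiv.prodCongr (Equiv.refl ι) (Equiv.refl (Fin 0))) ?_
      rintro ⟨S, j⟩
      exact j.elim0
  | succ s ih =>
    intro c hc x hv
    set v := Qw (TF w c) x with hvdef
    set α := c 0 * Qw w (fun S => x (S, 0)) with hα
    set r' := Qw (TF w (Fin.tail c)) (fun p => x (p.1, p.2.succ)) with hr'
    have hval : v = α + r' := by rw [hvdef, Qw_TF_succ, hα, hr']
    have step1 : Iso (TF w c) (Sum.elim (slice w (c 0)) (TF w (Fin.tail c))) := by
      rw [TF_cons_self w c]
      exact iso_TF_cons w (c 0) (Fin.tail c)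
    by_cases hr0 : r' = 0
    · -- v = α
      have hvα : v = α := by rw [hval, hr0, add_zero]
      have ht : Qw w (fun S => x (S, 0)) ≠ 0 := by
        intro h
        apply hv
        rw [hvα, hα, h, mul_zero]
      refine ⟨Fin.tail c, fun j => hc _, ?_⟩
      refine step1.trans (iso_sum ?_ (Iso.refl _))
      have h1 : c 0 = v * (Qw w (fun S => x (S, 0)))⁻¹ := by
        rw [hvα, hα]; field_simp
      have h2 := iso_slice (Sim.inv ht (hround _ ht)) v
      rw [← h1] at h2
      exact h2
    · obtain ⟨c₃, hc₃, hiso₃⟩ := ih (Fin.tail c) (fun j => hc _)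
        (fun p => x (p.1, p.2.succ)) hr0
      rw [← hr'] at hiso₃
      by_cases hα0 : α = 0
      · -- v = r'
        have hvr : v = r' := by rw [hval, hα0, zero_add]
        refine ⟨Fin.cons (c 0) c₃, ?_, ?_⟩
        · intro j
          induction j using Fin.cases with
          | zero => rw [Fin.cons_zero]; exact hc 0
          | succ j => rw [Fin.cons_succ]; exact hc₃ j
        · rw [← hvr] at hiso₃
          refine ((step1.trans (iso_sum (Iso.refl _) hiso₃)).trans
            (iso_shuffle _ _ _)).trans (iso_sum (Iso.refl _) ?_)
          exact (iso_TF_cons w (c 0) c₃).symm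
      · -- both α and r' nonzero
        have ht : Qw w (fun S => x (S, 0)) ≠ 0 := by
          intro h; apply hα0; rw [hα, h, mul_zero]
        have hsliceα : Iso (slice w (c 0)) (slice w α) := by
          have h1 : c 0 = α * (Qw w (fun S => x (S, 0)))⁻¹ := by
            rw [hα]; field_simp
          have h2 := iso_slice (Sim.inv ht (hround _ ht)) α
          rw [← h1] at h2
          exact h2
        have hvne : α + r' ≠ 0 := by rw [← hval]; exact hv
        set γ₂ := (α + r') * r' * α⁻¹ with hγ₂
        have hγ₂ne : γ₂ ≠ 0 :=
          mul_ne_zero (mul_ne_zero hvne hr0) (inv_ne_zero hα0)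
        refine ⟨Fin.cons γ₂ c₃, ?_, ?_⟩
        · intro j
          induction j using Fin.cases with
          | zero => rw [Fin.cons_zero]; exact hγ₂ne
          | succ j => rw [Fin.cons_succ]; exact hc₃ j
        · -- assemble
          have big : Iso (TF w c)
              (Sum.elim (Sum.elim (slice w α) (slice w r')) (TF w c₃)) :=
            (step1.trans (iso_sum hsliceα hiso₃)).trans (iso_sum_assoc _ _ _).symm
          have btrans := iso_sum (iso_two_slices w α r' hα0 hr0 hvne) (Iso.refl (TF w c₃))
          refine ((big.trans btrans).trans (iso_sum_assoc _ _ _)).trans ?_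
          rw [hval]
          exact iso_sum (Iso.refl _) (iso_TF_cons w γ₂ c₃).symm

end WIS

-- SECTION 9 : splitting and the main induction
namespace WIS
open Module QuadraticMap
variable {k : Type*} [Field k]
variable {ι κ : Type} [Fintype ι] [Fintype κ]

lemma le_mul_succ (n d : ℕ) : n ≤ n * (d + 1) := by
  conv_lhs => rw [← Nat.mul_one n]
  exact Nat.mul_le_mul_left _ (by omega)

lemma mul_succ_eq (n d : ℕ) : n * (d + 1) = n * d + n := by ring

lemma Qw_unit (β : k) (y : Unit → k) :
    Qw (fun _ : Unit => β) y = β * (y () * y ()) := by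
  rw [Qw_apply]
  simp

set_option maxHeartbeats 1000000 in
/-- an isotropic tensor multiple of an anisotropic round form splits off a hyperbolic pair -/
lemma split_iso (w : ι → k) (hround : ∀ v, Qw w v ≠ 0 → Sim w (Qw w v))
    (hanis : ∀ z, Qw w z = 0 → z = 0) (s : ℕ) (c : Fin (s + 2) → k)
    (hc : ∀ j, c j ≠ 0) (x : ι × Fin (s + 2) → k) (hx : x ≠ 0)
    (h0 : Qw (TF w c) x = 0) :
    ∃ (f : k) (c'' : Fin s → k), f ≠ 0 ∧ (∀ j, c'' j ≠ 0) ∧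
      Iso (TF w c) (Sum.elim (Sum.elim (slice w f) (slice w (-f))) (TF w c'')) := by
  classical
  -- find a slot with nonzero value
  have hex : ∃ j₀, Qw w (fun S => x (S, j₀)) ≠ 0 := by
    by_contra hno
    push_neg at hno
    apply hx
    funext p
    obtain ⟨S, j⟩ := p
    have h1 := hanis _ (hno j)
    exact congrFun h1 S
  obtain ⟨j₀, hj₀⟩ := hex
  set σ := Equiv.swap (0 : Fin (s + 2)) j₀ with hσ
  set c₁ : Fin (s + 2) → k := c ∘ σ with hc₁
  set x₁ : ι × Fin (s + 2) → k := fun p => x (p.1, σ p.2) with hx₁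
  have hc₁ne : ∀ j, c₁ j ≠ 0 := fun j => hc _
  have hIσ : Iso (TF w c) (TF w c₁) := by
    refine iso_of_equiv (w₁ := TF w c) (w₂ := TF w c₁)
      (Equiv.prodCongr (Equiv.refl ι) σ) ?_
    rintro ⟨S, j⟩
    simp only [hc₁, TF, Function.comp_apply, Equiv.prodCongr_apply, Equiv.coe_refl,
      Prod.map_apply, id_eq]
  have hval₁ : Qw (TF w c₁) x₁ = 0 := by
    have heq : Qw (TF w c₁) x₁ = Qw (TF w c) x := by
      rw [Qw_TF, Qw_TF]
      refine Fintype.sum_equiv σ _ _ fun j => ?_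
      simp only [hc₁, hx₁, Function.comp_apply]
    rw [heq, h0]
  have hcol0 : (fun S => x₁ (S, 0)) = fun S => x (S, j₀) := by
    funext S
    rw [hx₁]
    simp [hσ]
  have hcol0ne : Qw w (fun S => x₁ (S, 0)) ≠ 0 := by rw [hcol0]; exact hj₀
  set α := c₁ 0 * Qw w (fun S => x₁ (S, 0)) with hαdef
  have hαne : α ≠ 0 := mul_ne_zero (hc₁ne 0) hcol0ne
  set r' := Qw (TF w (Fin.tail c₁)) (fun p => x₁ (p.1, p.2.succ)) with hr'def
  have hsplit : (0 : k) = α + r' := by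
    rw [← hval₁, Qw_TF_succ]
  have hr'val : r' = -α := by linear_combination - hsplit
  have hr'ne : r' ≠ 0 := by rw [hr'val]; exact neg_ne_zero.mpr hαne
  obtain ⟨c₃, hc₃, hiso₃⟩ := split' w hround s (Fin.tail c₁)
    (fun j => hc₁ne _) (fun p => x₁ (p.1, p.2.succ)) hr'ne
  rw [← hr'def] at hiso₃
  refine ⟨α, c₃, hαne, hc₃, ?_⟩
  have step1 : Iso (TF w c₁) (Sum.elim (slice w (c₁ 0)) (TF w (Fin.tail c₁))) := by
    rw [TF_cons_self w c₁]
    exact iso_TF_cons w (c₁ 0) (Fin.tail c₁)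
  have hsliceα : Iso (slice w (c₁ 0)) (slice w α) := by
    have h1 : c₁ 0 = α * (Qw w (fun S => x₁ (S, 0)))⁻¹ := by
      rw [hαdef]; field_simp
    have h2 := iso_slice (Sim.inv hcol0ne (hround _ hcol0ne)) α
    rw [← h1] at h2
    exact h2
  rw [hr'val] at hiso₃
  exact ((hIσ.trans step1).trans (iso_sum hsliceα hiso₃)).trans (iso_sum_assoc _ _ _).symm

lemma TF_one_anis (w : ι → k) (hanis : ∀ z, Qw w z = 0 → z = 0)
    (c : Fin 1 → k) (hc : c 0 ≠ 0) : ∀ z, Qw (TF w c) z = 0 → z = 0 := by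
  intro z hz
  rw [Qw_TF, Fin.sum_univ_one] at hz
  have h1 : Qw w (fun S => z (S, 0)) = 0 := by
    rcases mul_eq_zero.mp hz with h | h
    · exact absurd h hc
    · exact h
  have h2 := hanis _ h1
  funext p
  obtain ⟨S, j⟩ := p
  have : j = 0 := Subsingleton.elim _ _
  rw [this]
  exact congrFun h2 S

/-- the embedding of the `q` space into the `Q` space -/
noncomputable def qEmb (w : ι → k) (s : ℕ) [DecidableEq ι] (i₀ : ι) :
    ((ι × Fin s) ⊕ Unit → k) →ₗ[k] ((ι × Fin s) ⊕ ι → k) where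
  toFun x := Sum.elim (x ∘ Sum.inl) (fun S => if S = i₀ then x (Sum.inr ()) else 0)
  map_add' x y := by
    funext i
    cases i with
    | inl p => rfl
    | inr S =>
      show (if S = i₀ then (x + y) (Sum.inr ()) else 0) = _
      by_cases h : S = i₀ <;> simp [h]
  map_smul' t x := by
    funext i
    cases i with
    | inl p => rfl
    | inr S =>
      show (if S = i₀ then (t • x) (Sum.inr ()) else 0) = _
      by_cases h : S = i₀ <;> simp [h]

lemma qEmb_injective (w : ι → k) (s : ℕ) [DecidableEq ι] (i₀ : ι) :
    Function.Injective (qEmb (k := k) w s i₀) := by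
  intro x y h
  funext i
  cases i with
  | inl p => exact congrFun h (Sum.inl p)
  | inr u =>
    have := congrFun h (Sum.inr i₀)
    simp only [qEmb, LinearMap.coe_mk, AddHom.coe_mk, Sum.elim_inr, if_pos rfl] at this
    cases u
    exact this

lemma qEmb_value (w : ι → k) (s : ℕ) [DecidableEq ι] (i₀ : ι) (hw : w i₀ = 1)
    (c : Fin s → k) (β : k) (x : (ι × Fin s) ⊕ Unit → k) :
    Qw (Sum.elim (TF w c) (slice w β)) (qEmb w s i₀ x)
      = Qw (Sum.elim (TF w c) (fun _ : Unit => β)) x := by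
  rw [Qw_sum_apply, Qw_sum_apply]
  have h1 : (qEmb w s i₀ x) ∘ Sum.inl = x ∘ Sum.inl := rfl
  have h2 : (qEmb w s i₀ x) ∘ Sum.inr = fun S => if S = i₀ then x (Sum.inr ()) else 0 := rfl
  have e1 : (Sum.elim (TF w c) (slice w β)) ∘ Sum.inl = TF w c := rfl
  have e2 : (Sum.elim (TF w c) (slice w β)) ∘ Sum.inr = slice w β := rfl
  have e3 : (Sum.elim (TF w c) (fun _ : Unit => β)) ∘ Sum.inl = TF w c := rfl
  have e4 : (Sum.elim (TF w c) (fun _ : Unit => β)) ∘ Sum.inr = (fun _ : Unit => β) := rfl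
  rw [h1, h2, e1, e2, e3, e4]
  congr 1
  rw [Qw_apply, Qw_unit]
  calc ∑ S : ι, slice w β S *
        ((if S = i₀ then x (Sum.inr ()) else 0) * (if S = i₀ then x (Sum.inr ()) else 0))
      = ∑ S : ι, (if S = i₀ then β * (x (Sum.inr ()) * x (Sum.inr ())) else 0) := by
        refine Finset.sum_congr rfl fun S _ => ?_
        by_cases h : S = i₀
        · rw [if_pos h, if_pos h, h, slice, hw]; ring
        · rw [if_neg h, if_neg h]; ring
    _ = β * (x (Sum.inr ()) * x (Sum.inr ())) := by
        rw [Finset.sum_ite_eq' Finset.univ i₀ (fun _ => β * (x (Sum.inr ()) * x (Sum.inr ())))]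
        exact if_pos (Finset.mem_univ _)

/-- MAIN INDUCTION : transfer of the witt index bound to the subform -/
lemma main_induction (h2 : (2 : k) ≠ 0) (w : ι → k) [DecidableEq ι]
    (hround : ∀ v, Qw w v ≠ 0 → Sim w (Qw w v))
    (hanis : ∀ z, Qw w z = 0 → z = 0) (hwnz : ∀ i, w i ≠ 0) (d : ℕ) :
    ∀ (s : ℕ), 1 ≤ s → ∀ (c : Fin s → k), (∀ j, c j ≠ 0) → ∀ (β : k), β ≠ 0 →
    Fintype.card ι * d + 1 ≤ wittIndex k (Qw (Sum.elim (TF w c) (slice w β))) →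
    Fintype.card ι * d + 1 ≤ wittIndex k (Qw (Sum.elim (TF w c) (fun _ : Unit => β))) := by
  induction d with
  | zero =>
    intro s hs c hc β hβ hiW
    simp only [Nat.mul_zero, Nat.zero_add] at hiW ⊢
    by_cases hTF : ∃ z, z ≠ 0 ∧ Qw (TF w c) z = 0
    · -- the tensor part is isotropic, q is isotropic
      obtain ⟨z, hz, hz0⟩ := hTF
      refine one_le_wittIndex _ (extL z) (fun h => hz ?_) ?_
      · funext p; exact congrFun h (Sum.inl p)
      · rw [Qw_sum_apply, comp_inl_extL, comp_inr_extL, map_zero, add_zero]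
        exact hz0
    · push_neg at hTF
      obtain ⟨y, hy, hy0⟩ := exists_isotropic_of_wittIndex_pos _ hiW
      rw [Qw_sum_apply] at hy0
      have hl1 : Sum.elim (TF w c) (slice w β) ∘ Sum.inl = TF w c := rfl
      have hl2 : Sum.elim (TF w c) (slice w β) ∘ Sum.inr = slice w β := rfl
      rw [hl1, hl2, Qw_slice] at hy0
      by_cases hQy2 : Qw w (y ∘ Sum.inr) = 0
      · exfalso
        have h1 : y ∘ Sum.inr = 0 := hanis _ hQy2
        rw [hQy2, mul_zero, add_zero] at hy0
        have h3 : y ∘ Sum.inl = 0 := by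
          by_contra hne
          exact hTF _ hne hy0
        apply hy
        funext i
        cases i with
        | inl p => exact congrFun h3 p
        | inr S => exact congrFun h1 S
      · -- move the represented value
        obtain ⟨g, hg⟩ := sim_TF (Sim.inv hQy2 (hround _ hQy2)) c
        have hval : Qw (TF w c) (g (y ∘ Sum.inl)) = -β := by
          rw [hg]
          have : Qw (TF w c) (y ∘ Sum.inl) = -(β * Qw w (y ∘ Sum.inr)) := by
            linear_combination hy0
          rw [this]
          field_simp
        set zz : (ι × Fin s) ⊕ Unit → k := Sum.elim (g (y ∘ Sum.inl)) (fun _ => 1) with hzz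
        refine one_le_wittIndex _ zz (fun h => ?_) ?_
        · have := congrFun h (Sum.inr ())
          simp [hzz] at this
        · rw [Qw_sum_apply]
          have e1 : zz ∘ Sum.inl = g (y ∘ Sum.inl) := rfl
          have e2 : zz ∘ Sum.inr = fun _ => 1 := rfl
          have e3 : Sum.elim (TF w c) (fun _ : Unit => β) ∘ Sum.inl = TF w c := rfl
          have e4 : Sum.elim (TF w c) (fun _ : Unit => β) ∘ Sum.inr = fun _ : Unit => β := rfl
          rw [e1, e2, e3, e4, hval, Qw_unit]
          ring
  | succ d ihd =>
    intro s hs c hc β hβ hiW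
    by_cases hTF : ∃ z, z ≠ 0 ∧ Qw (TF w c) z = 0
    · -- split off a hyperbolic pair
      obtain ⟨z, hz, hz0⟩ := hTF
      -- s must be at least 2
      rcases s with _ | s
      · omega
      rcases s with _ | s
      · exact absurd (TF_one_anis w hanis c (hc 0) z hz0) hz
      obtain ⟨f, c₃, hf, hc₃, hiso⟩ := split_iso w hround hanis s c hc z hz hz0
      -- the cancellation step for an arbitrary extra block X
      have key : ∀ (κ' : Type) [Fintype κ'] (X : κ' → k),
          wittIndex k (Qw (Sum.elim (TF w c) X))
            = Fintype.card ι + wittIndex k (Qw (Sum.elim (TF w c₃) X)) := by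
        intro κ' _ X
        have big : Iso (Sum.elim (TF w c) X)
            (Sum.elim (Sum.elim (TF w c₃) X) (Sum.elim (slice w f) (slice w (-f)))) := by
          refine (iso_sum hiso (Iso.refl X)).trans ?_
          exact (iso_sum_assoc _ _ _).trans (iso_sum_comm _ _)
        rw [big.wittIndex_eq]
        have := canceln (ι := (ι × Fin (s + 2 - 2)) ⊕ κ') (κ := ι) h2
          (Sum.elim (Sum.elim (TF w c₃) X) (Sum.elim (slice w f) (slice w (-f))))
          (fun S => ⟨mul_ne_zero (hwnz S) hf, by show w S * -f = -(w S * f); ring⟩)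
        rw [this]
        rfl
      rw [key ι (slice w β)] at hiW
      rw [key Unit (fun _ : Unit => β)]
      -- now use the inner induction or the base anisotropic case
      rcases Nat.eq_zero_or_pos s with rfl | hs'
      · -- c₃ is empty : the rest is anisotropic, contradiction
        exfalso
        have hempty : Iso (Sum.elim (TF w (c₃ : Fin 0 → k)) (slice w β)) (slice w β) := by
          refine iso_of_equiv (w₁ := Sum.elim (TF w c₃) (slice w β)) (w₂ := slice w β)
            ((Equiv.sumComm _ _).trans (Equiv.sumEmpty ι (ι × Fin 0))).symm ?_
          intro S
          rfl
        have e0 : wittIndex k (Qw (Sum.elim (TF w c₃) (slice w β)))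
            = wittIndex k (Qw (slice w β)) := hempty.wittIndex_eq
        have e1 : wittIndex k (Qw (slice w β)) = 0 := by
          refine wittIndex_anisotropic _ (fun x hx => ?_)
          rw [Qw_slice] at hx
          rcases mul_eq_zero.mp hx with h | h
          · exact absurd h hβ
          · exact hanis _ h
        rw [e0, e1] at hiW
        have hm := le_mul_succ (Fintype.card ι) d
        omega
      · have h3 := mul_succ_eq (Fintype.card ι) d
        have hIH := ihd (s) hs' c₃ hc₃ β hβ (by omega)
        omega
    · -- tensor part anisotropic : witt index too small, contradiction
      exfalso
      push_neg at hTF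
      have hbound := wittIndex_le_card (Sum.elim (TF w c) (slice w β)) ?_
      · have hm := le_mul_succ (Fintype.card ι) d
        omega
      · intro x hx
        have he : Sum.elim (TF w c) (slice w β) ∘ Sum.inl = TF w c := rfl
        rw [he] at hx
        by_contra hne
        exact hTF x hne hx

end WIS

-- SECTION 10 : final assembly
namespace WIS
open Module QuadraticMap
variable {k : Type*} [Field k]

/-- lower bound for tensor multiples -/
lemma wittIndex_TF_ge {ι : Type*} [Fintype ι] (w : ι → k) :
    ∀ (s : ℕ) (c : Fin s → k), (∀ j, c j ≠ 0) →
    s * wittIndex k (Qw w) ≤ wittIndex k (Qw (TF w c)) := by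
  intro s
  induction s with
  | zero => intro c hc; simp
  | succ s ih =>
    intro c hc
    have hiso : Iso (TF w c) (Sum.elim (slice w (c 0)) (TF w (Fin.tail c))) := by
      rw [TF_cons_self w c]
      exact iso_TF_cons w (c 0) (Fin.tail c)
    rw [hiso.wittIndex_eq]
    have hsum := wittIndex_sum_ge (Sum.elim (slice w (c 0)) (TF w (Fin.tail c)))
    have e1 : Sum.elim (slice w (c 0)) (TF w (Fin.tail c)) ∘ Sum.inl = slice w (c 0) := rfl
    have e2 : Sum.elim (slice w (c 0)) (TF w (Fin.tail c)) ∘ Sum.inr = TF w (Fin.tail c) := rfl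
    rw [e1, e2] at hsum
    have hslice : wittIndex k (Qw (slice w (c 0))) = wittIndex k (Qw w) := by
      have : slice w (c 0) = fun S => c 0 * w S := funext fun S => mul_comm _ _
      rw [this, wittIndex_scale (c 0) (hc 0)]
    have htail := ih (Fin.tail c) (fun j => hc _)
    rw [hslice] at hsum
    calc (s + 1) * wittIndex k (Qw w) = wittIndex k (Qw w) + s * wittIndex k (Qw w) := by ring
      _ ≤ wittIndex k (Qw w) + wittIndex k (Qw (TF w (Fin.tail c))) := by omega
      _ ≤ _ := hsum

/-- the reindexing that separates the last slot -/
def lastEquiv (ι : Type*) (m : ℕ) : (ι × Fin m) ⊕ ι ≃ ι × Fin (m + 1) where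
  toFun := Sum.elim (fun p => (p.1, p.2.castSucc)) (fun S => (S, Fin.last m))
  invFun p := Fin.lastCases (Sum.inr p.1) (fun j => Sum.inl (p.1, j)) p.2
  left_inv := by
    rintro (⟨S, j⟩ | S) <;> simp
  right_inv := by
    rintro ⟨S, j⟩
    induction j using Fin.lastCases with
    | last => simp
    | cast j => simp

end WIS


/-- With φ an r-fold Pfister form with coefficients a, and
b = ⟨b₁,…,bₙ⟩ (here n = m+1 ≥ 2), b' = ⟨b₁,…,b_{n−1}⟩, q = φ ⊗ b' ⊥ ⟨bₙ⟩:
for every 0 ≤ d ≤ ⌊n/2⌋ − 1, i_W(φ ⊗ b) > 2^r d ↔ i_W(q) > 2^r d.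
Both forms are realized as diagonal forms. -/
theorem witt_index_iff_subform
    (k : Type*) [Field k] (h2 : (2 : k) ≠ 0)
    (r m : ℕ) (hm : 1 ≤ m) (a : Fin r → k) (ha : ∀ i, a i ≠ 0)
    (b : Fin (m + 1) → k) (hb : ∀ i, b i ≠ 0)
    (d : ℕ) (hd : d + 1 ≤ (m + 1) / 2) :
    2 ^ r * d < wittIndex k (QuadraticMap.weightedSumSquares k
        (fun p : Finset (Fin r) × Fin (m + 1) => (∏ i ∈ p.1, -a i) * b p.2)) ↔
    2 ^ r * d < wittIndex k (QuadraticMap.weightedSumSquares k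
        (Sum.elim
          (fun p : Finset (Fin r) × Fin m => (∏ i ∈ p.1, -a i) * b p.2.castSucc)
          (fun _ : Unit => b (Fin.last m)))) := by

  classical
  open WIS in
  show 2 ^ r * d < wittIndex k (Qw (TF (pw r a) b)) ↔
    2 ^ r * d < wittIndex k (Qw (Sum.elim (TF (pw r a) (fun j : Fin m => b j.castSucc))
      (fun _ : Unit => b (Fin.last m))))
  set w : Finset (Fin r) → k := WIS.pw r a with hwdef
  set c : Fin m → k := fun j => b j.castSucc with hcdef
  set β : k := b (Fin.last m) with hβdef
  have hwnz : ∀ S, w S ≠ 0 := WIS.pw_ne_zero r a ha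
  have hβ : β ≠ 0 := hb _
  have hc : ∀ j, c j ≠ 0 := fun j => hb _
  have hcard : Fintype.card (Finset (Fin r)) = 2 ^ r := by
    rw [Fintype.card_finset, Fintype.card_fin]
  -- structural isometry for the big form
  have hQiso : WIS.Iso (WIS.TF w b) (Sum.elim (WIS.TF w c) (WIS.slice w β)) := by
    refine WIS.iso_of_equiv (w₁ := WIS.TF w b)
      (w₂ := Sum.elim (WIS.TF w c) (WIS.slice w β)) (WIS.lastEquiv (Finset (Fin r)) m) ?_
    rintro (⟨S, j⟩ | S) <;> rfl
  have hQeq : wittIndex k (WIS.Qw (WIS.TF w b))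
      = wittIndex k (WIS.Qw (Sum.elim (WIS.TF w c) (WIS.slice w β))) := hQiso.wittIndex_eq
  -- easy direction : q is a subform of Q
  have heasy : wittIndex k (WIS.Qw (Sum.elim (WIS.TF w c) (fun _ : Unit => β)))
      ≤ wittIndex k (WIS.Qw (Sum.elim (WIS.TF w c) (WIS.slice w β))) :=
    WIS.wittIndex_le_of_map _ _ (WIS.qEmb w m ∅) (WIS.qEmb_injective w m ∅)
      (WIS.qEmb_value w m ∅ (WIS.pw_empty r a) c β)
  constructor
  · -- hard direction
    intro h
    rw [hQeq] at h
    by_cases hiso : ∃ z, z ≠ 0 ∧ WIS.Qw w z = 0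
    · -- the Pfister form is isotropic
      rcases r with _ | r'
      · obtain ⟨z, hz, hz0⟩ := hiso
        exact absurd (WIS.pw_zero_anisotropic a z hz0) hz
      · have hlb := WIS.pfister_iso_lb (r' + 1) a ha hiso
        have h1 := WIS.wittIndex_TF_ge w m c hc
        have h2' := WIS.wittIndex_inl_le (Sum.elim (WIS.TF w c) (fun _ : Unit => β))
        rw [show Sum.elim (WIS.TF w c) (fun _ : Unit => β) ∘ Sum.inl = WIS.TF w c from rfl] at h2'
        have hm2 : 2 * d + 1 ≤ m := by
          have := (Nat.le_div_iff_mul_le (by omega)).mp hd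
          omega
        have hX : 2 ≤ 2 ^ (r' + 1) := by
          calc 2 = 2 ^ 1 := by norm_num
            _ ≤ 2 ^ (r' + 1) := Nat.pow_le_pow_right (by omega) (by omega)
        -- chain : (2d+1) * 2^r ≤ 2 * iW(q)
        have hA : (2 * d + 1) * 2 ^ (r' + 1)
            ≤ 2 * wittIndex k (WIS.Qw (Sum.elim (WIS.TF w c) (fun _ : Unit => β))) := by
          calc (2 * d + 1) * 2 ^ (r' + 1) ≤ m * 2 ^ (r' + 1) :=
                Nat.mul_le_mul_right _ hm2
            _ ≤ m * (2 * wittIndex k (WIS.Qw w)) := Nat.mul_le_mul_left _ hlb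
            _ = 2 * (m * wittIndex k (WIS.Qw w)) := by ring
            _ ≤ 2 * wittIndex k (WIS.Qw (WIS.TF w c)) := by omega
            _ ≤ 2 * wittIndex k (WIS.Qw (Sum.elim (WIS.TF w c) (fun _ : Unit => β))) := by
                omega
        have hA' : 2 * (2 ^ (r' + 1) * d) + 2 ^ (r' + 1)
            ≤ 2 * wittIndex k (WIS.Qw (Sum.elim (WIS.TF w c) (fun _ : Unit => β))) := by
          calc 2 * (2 ^ (r' + 1) * d) + 2 ^ (r' + 1) = (2 * d + 1) * 2 ^ (r' + 1) := by ring
            _ ≤ _ := hA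
        linarith
    · -- the Pfister form is anisotropic : use the main induction
      push_neg at hiso
      have hanis : ∀ z, WIS.Qw w z = 0 → z = 0 := by
        intro z hz
        by_contra hne
        exact hiso z hne hz
      have hmain := WIS.main_induction h2 w (WIS.pfister_round r a ha) hanis hwnz d m hm c hc β hβ
      rw [hcard] at hmain
      have := hmain (by omega)
      omega
  · -- easy direction
    intro h
    rw [hQeq]
    omega
end

section
/- Let C be an associative composition algebra over k and v₂ : Cⁿ → Mₙ(C) the map c ↦ (b_i c_i c̄_j)_{i,j} with b_i ∈ k*. If c, c' ∈ C^{n−1} × k both have nonzero last coordinate (lying in k·1) and v₂(c) = λ·v₂(c') for some λ ∈ k*, then c and c' are proportional: there exists μ ∈ k* with c = μ c'. In other words, v₂ induces an injective map on the open subset {cₙ ≠ 0} of P(C^{n−1} × k). -/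
/-- The Veronese map v₂(c) = (bᵢ cᵢ c̄ⱼ) is injective on the open set
of points of P(C^{n−1} × k) with nonzero last coordinate: if c and c' both have
nonzero last coordinate lying in k·1 and v₂(c) = λ·v₂(c') with λ ∈ k*, then c = μ·c'
for some μ ∈ k*. -/
theorem veronese_injective_on_affine_chart
    (k : Type*) [Field k] (h2 : (2 : k) ≠ 0)
    (C : Type*) [Ring C] [Algebra k C]
    (φ : QuadraticForm k C)
    (hmul : ∀ x y : C, φ (x * y) = φ x * φ y)
    (bar : C →ₗ[k] C)
    (hbarm : ∀ x y : C, bar (x * y) = bar y * bar x)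
    (hbari : ∀ x : C, bar (bar x) = x)
    (hconj : ∀ x : C, x * bar x = φ x • (1 : C))
    (m : ℕ) (b : Fin (m + 1) → k) (hb : ∀ i, b i ≠ 0)
    (v₂ : (Fin (m + 1) → C) → Matrix (Fin (m + 1)) (Fin (m + 1)) C)
    (hv₂ : ∀ c i j, v₂ c i j = b i • (c i * bar (c j)))
    (c c' : Fin (m + 1) → C) (t t' : k) (ht : t ≠ 0) (ht' : t' ≠ 0)
    (hc : c (Fin.last m) = algebraMap k C t)
    (hc' : c' (Fin.last m) = algebraMap k C t')
    (lam : k) (hlam : lam ≠ 0)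
    (h : v₂ c = lam • v₂ c') :
    ∃ μ : k, μ ≠ 0 ∧ c = μ • c' := by
  have hbar1 : bar (1 : C) = 1 := by
    have h1 := hbarm (bar 1) 1
    rw [mul_one, hbari] at h1
    simpa using h1.symm
  refine ⟨lam * t' / t, div_ne_zero (mul_ne_zero hlam ht') ht, funext fun i => ?_⟩
  have key := congrFun (congrFun h i) (Fin.last m)
  simp only [Matrix.smul_apply, hv₂, hc, hc', Algebra.algebraMap_eq_smul_one,
    map_smul, hbar1, mul_smul_comm, mul_one, smul_smul] at key
  -- key : (b i * t) • c i = (lam * (b i * t')) • c' i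
  have hbt : b i * t ≠ 0 := mul_ne_zero (hb i) ht
  have : c i = ((b i * t)⁻¹ * (lam * (b i * t'))) • c' i := by
    rw [mul_smul, ← key, smul_smul, inv_mul_cancel₀ hbt, one_smul]
  rw [this, Pi.smul_apply]
  congr 1
  have hbi := hb i
  field_simp
end

section
/- Let k be a field of characteristic not 2 and a ∈ k* a non-square. Let Z ⊆ P(k^{2(n−1)}) be the projectivization of the set of matrices x ∈ M_n(k(√a)) of the form having only the n-th row and n-th column nonzero (lying in the Peirce 1/2-space of E_{nn} in the Jordan algebra of σ_b-hermitian matrices) that satisfy x² = 0. Then over the algebraic closure of k, Z becomes isomorphic to the disjoint union of two copies of P^{n−2}; equivalently, the affine cone over Z̄ is the union of two linear subspaces of dimension n−1 meeting only at 0. -/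
open Fin.NatCast in
/-- (r = 1 case of the indeterminacy locus Z₁.) Let a ∈ k* be a
non-square, char k ≠ 2. Over an algebraically closed extension Ω of k, the
composition algebra C = k(√a) splits as Ω × Ω with conjugation the swap. Identify
the Peirce space J_{1/2}(E_{nn}) (n = m+1) of the Jordan algebra of σ_b-hermitian
matrices with (Ω × Ω)^m, an element c corresponding to the matrix mat(c) supported
on the last row and column, with last row c and (i,n) entry (bₙ/bᵢ)·swap(cᵢ). Then
the affine cone {c | mat(c)² = 0} over Z̄ is the union of two Ω-linear subspaces of
dimension m = n − 1 meeting only at 0. -/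
theorem indeterminacy_locus_r_one
    (k : Type*) [Field k] (h2 : (2 : k) ≠ 0)
    (a : k) (ha : a ≠ 0) (hns : ∀ s : k, s ^ 2 ≠ a)
    (Ω : Type*) [Field Ω] [IsAlgClosed Ω] [Algebra k Ω]
    (m : ℕ) (hm : 1 ≤ m)
    (b : Fin (m + 1) → k) (hb : ∀ i, b i ≠ 0)
    (mat : (Fin m → Ω × Ω) → Matrix (Fin (m + 1)) (Fin (m + 1)) (Ω × Ω))
    (hmat : ∀ c i j, mat c i j =
      if hi : i = Fin.last m then
        (if hj : j = Fin.last m then 0 else c (j.castPred hj))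
      else
        (if hj : j = Fin.last m then
          algebraMap k Ω (b (Fin.last m) / b (i.castPred hi)) •
            Prod.swap (c (i.castPred hi))
        else 0)) :
    ∃ U V : Submodule Ω (Fin m → Ω × Ω),
      {c | mat c ^ 2 = 0} = (U : Set (Fin m → Ω × Ω)) ∪ (V : Set (Fin m → Ω × Ω)) ∧
      U ⊓ V = ⊥ ∧
      Module.finrank Ω U = m ∧ Module.finrank Ω V = m := by
  classical
  set ι₁ : (Fin m → Ω) →ₗ[Ω] (Fin m → Ω × Ω) :=
    LinearMap.pi (fun i => (LinearMap.inl Ω Ω Ω).comp (LinearMap.proj i)) with hι₁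
  set ι₂ : (Fin m → Ω) →ₗ[Ω] (Fin m → Ω × Ω) :=
    LinearMap.pi (fun i => (LinearMap.inr Ω Ω Ω).comp (LinearMap.proj i)) with hι₂
  have hι₁app : ∀ (d : Fin m → Ω) (i : Fin m), ι₁ d i = (d i, 0) := by
    intro d i; simp [hι₁]
  have hι₂app : ∀ (d : Fin m → Ω) (i : Fin m), ι₂ d i = (0, d i) := by
    intro d i; simp [hι₂]
  have hU : ∀ c : Fin m → Ω × Ω, c ∈ LinearMap.range ι₁ ↔ ∀ i, (c i).2 = 0 := by
    intro c
    constructor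
    · rintro ⟨d, rfl⟩ i; rw [hι₁app]
    · intro h
      refine ⟨fun i => (c i).1, funext fun i => ?_⟩
      rw [hι₁app]
      exact Prod.ext rfl (h i).symm
  have hV : ∀ c : Fin m → Ω × Ω, c ∈ LinearMap.range ι₂ ↔ ∀ i, (c i).1 = 0 := by
    intro c
    constructor
    · rintro ⟨d, rfl⟩ i; rw [hι₂app]
    · intro h
      refine ⟨fun i => (c i).2, funext fun i => ?_⟩
      rw [hι₂app]
      exact Prod.ext (h i).symm rfl
  have hlam : ∀ i : Fin m, (algebraMap k Ω) (b (Fin.last m) / b i.castSucc) ≠ 0 := by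
    intro i
    have h1 : b (Fin.last m) / b i.castSucc ≠ 0 := div_ne_zero (hb _) (hb _)
    exact fun h => h1 ((algebraMap k Ω).injective (by simpa using h))
  -- key entry computation
  have key : ∀ (c : Fin m → Ω × Ω) (i j : Fin m),
      (mat c ^ 2) i.castSucc j.castSucc =
        algebraMap k Ω (b (Fin.last m) / b i.castSucc) •
          ((c i).2 * (c j).1, (c i).1 * (c j).2) := by
    intro c i j
    have hi : i.castSucc ≠ Fin.last m := (Fin.castSucc_lt_last i).ne
    have hj : j.castSucc ≠ Fin.last m := (Fin.castSucc_lt_last j).ne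
    rw [sq, Matrix.mul_apply]
    rw [Finset.sum_eq_single (Fin.last m)]
    · rw [hmat, hmat, dif_neg hi, dif_pos rfl, dif_pos rfl, dif_neg hj]
      simp only [Fin.castPred_castSucc, Fin.coe_eq_castSucc]
      apply Prod.ext <;>
        simp [Prod.ext_iff, smul_eq_mul, mul_comm, mul_assoc, mul_left_comm]
    · intro l _ hl
      rw [hmat, dif_neg hi, dif_neg hl, zero_mul]
    · intro h; exact absurd (Finset.mem_univ _) h
  refine ⟨LinearMap.range ι₁, LinearMap.range ι₂, ?_, ?_, ?_, ?_⟩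
  · ext c
    simp only [Set.mem_setOf_eq, Set.mem_union, SetLike.mem_coe, hU, hV]
    constructor
    · intro hc
      have hij : ∀ i j : Fin m, (c i).2 * (c j).1 = 0 ∧ (c i).1 * (c j).2 = 0 := by
        intro i j
        have h0 := key c i j
        rw [hc] at h0
        have h1 : ((c i).2 * (c j).1, (c i).1 * (c j).2) = (0 : Ω × Ω) := by
          rcases smul_eq_zero.mp h0.symm with h | h
          · exact absurd h (hlam i)
          · exact h
        exact ⟨congrArg Prod.fst h1, congrArg Prod.snd h1⟩
      by_cases hall : ∀ i, (c i).1 = 0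
      · exact Or.inr hall
      · push_neg at hall
        obtain ⟨i0, hi0⟩ := hall
        refine Or.inl fun j => ?_
        rcases mul_eq_zero.mp (hij i0 j).2 with h | h
        · exact absurd h hi0
        · exact h
    · intro hc
      apply Matrix.ext
      intro i j
      rw [Matrix.zero_apply]
      rcases Fin.eq_castSucc_or_eq_last i with ⟨i', rfl⟩ | rfl
      · rcases Fin.eq_castSucc_or_eq_last j with ⟨j', rfl⟩ | rfl
        · rw [key]
          rcases hc with hc | hc
          · rw [hc i', zero_mul, hc j', mul_zero]
            simp
          · rw [hc j', mul_zero, hc i', zero_mul]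
            simp
        · rw [sq, Matrix.mul_apply]
          apply Finset.sum_eq_zero
          intro l _
          by_cases hl : l = Fin.last m
          · subst hl
            rw [hmat c (Fin.last m) (Fin.last m), dif_pos rfl, dif_pos rfl, mul_zero]
          · rw [hmat c i'.castSucc l, dif_neg (Fin.castSucc_lt_last i').ne, dif_neg hl,
              zero_mul]
      · rcases Fin.eq_castSucc_or_eq_last j with ⟨j', rfl⟩ | rfl
        · rw [sq, Matrix.mul_apply]
          apply Finset.sum_eq_zero
          intro l _
          by_cases hl : l = Fin.last m
          · subst hl
            rw [hmat c (Fin.last m) (Fin.last m), dif_pos rfl, dif_pos rfl, zero_mul]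
          · rw [hmat c l j'.castSucc, dif_neg hl, dif_neg (Fin.castSucc_lt_last j').ne,
              mul_zero]
        · rw [sq, Matrix.mul_apply]
          apply Finset.sum_eq_zero
          intro l _
          by_cases hl : l = Fin.last m
          · subst hl
            rw [hmat c (Fin.last m) (Fin.last m), dif_pos rfl, dif_pos rfl, zero_mul]
          · rw [hmat c (Fin.last m) l, dif_pos rfl, dif_neg hl,
              hmat c l (Fin.last m), dif_neg hl, dif_pos rfl]
            rcases hc with hcc | hcc
            · apply Prod.ext <;> simp [hcc (l.castPred hl), smul_eq_mul]
            · apply Prod.ext <;> simp [hcc (l.castPred hl), smul_eq_mul]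
  · rw [eq_bot_iff]
    rintro c ⟨hc1, hc2⟩
    rw [SetLike.mem_coe, hU] at hc1
    rw [SetLike.mem_coe, hV] at hc2
    simp only [Submodule.mem_bot]
    funext i
    exact Prod.ext (hc2 i) (hc1 i)
  · have hinj : Function.Injective ι₁ := by
      intro d e h
      funext i
      have := congrFun h i
      rw [hι₁app, hι₁app] at this
      exact (Prod.mk.injEq _ _ _ _).mp this |>.1
    rw [LinearMap.finrank_range_of_inj hinj]
    simp
  · have hinj : Function.Injective ι₂ := by
      intro d e h
      funext i
      have := congrFun h i
      rw [hι₂app, hι₂app] at this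
      exact (Prod.mk.injEq _ _ _ _).mp this |>.2
    rw [LinearMap.finrank_range_of_inj hinj]
    simp
end
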